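/- arXiv:2605.14273 — 11 statements merged into one kernel-verified Lean document; each statement's English description precedes it below -/
import Mathlib

section
/- Strong duality for generalized dual decomposition: Let X be a nonempty set, N ≥ 1, and let f_i : X → ℝ for i = 1,…,N with {∑_{i=1}^N f_i(x) : x ∈ X} bounded below. Consider the set D of all dual bounds ∑_{i=1}^N inf_{x ∈ X} (f_i(x) + g_i(x)), taken over all families g_i : X → ℝ such that ∑_{i=1}^N g_i(x) = 0 for all x ∈ X and each set {f_i(x) + g_i(x) : x ∈ X} is bounded below. Then v* := inf_{x ∈ X} ∑_{i=1}^N f_i(x) is the greatest element of D, i.e., v* ∈ D and d ≤ v* for every d ∈ D. -/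
open Pointwise


/-- Strong duality for generalized dual decomposition: the primal value is the
greatest element of the set of all dual bounds. -/
theorem gdd_strong_duality {α : Type*} (X : Set α) (hX : X.Nonempty)
    (N : ℕ) (hN : 1 ≤ N) (f : Fin N → α → ℝ)
    (hbdd : BddBelow ((fun x => ∑ i, f i x) '' X)) :
    IsGreatest
      {d : ℝ | ∃ g : Fin N → α → ℝ,
        (∀ x ∈ X, ∑ i, g i x = 0) ∧
        (∀ i, BddBelow ((fun x => f i x + g i x) '' X)) ∧
        d = ∑ i, sInf ((fun x => f i x + g i x) '' X)}
      (sInf ((fun x => ∑ i, f i x) '' X)) := by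
  have hNpos : (0:ℝ) < N := by exact_mod_cast hN
  set S : Set ℝ := (fun x => ∑ i, f i x) '' X with hS
  have hSne : S.Nonempty := hX.image _
  constructor
  · -- membership: take g i x = (∑ j, f j x)/N - f i x
    refine ⟨fun i x => (∑ j, f j x) / N - f i x, ?_, ?_, ?_⟩
    · intro x hx
      rw [Finset.sum_sub_distrib, Finset.sum_const, Finset.card_univ,
        Fintype.card_fin]
      rw [nsmul_eq_mul]
      field_simp
      ring
    · intro i
      have himg : (fun x => f i x + ((∑ j, f j x) / N - f i x)) '' X
          = (N:ℝ)⁻¹ • S := by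
        rw [hS, ← Set.image_smul, Set.image_image]
        apply Set.image_congr
        intro x _
        simp only [smul_eq_mul]
        field_simp
        ring
      rw [himg]
      exact hbdd.smul_of_nonneg (by positivity)
    · have himg : ∀ i : Fin N, (fun x => f i x + ((∑ j, f j x) / N - f i x)) '' X
          = (N:ℝ)⁻¹ • S := by
        intro i
        rw [hS, ← Set.image_smul, Set.image_image]
        apply Set.image_congr
        intro x _
        simp only [smul_eq_mul]
        field_simp
        ring
      have hinf : sInf ((N:ℝ)⁻¹ • S) = (N:ℝ)⁻¹ * sInf S := by
        rw [Real.sInf_smul_of_nonneg (by positivity)]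
        simp [smul_eq_mul]
      calc sInf S = ∑ _i : Fin N, (N:ℝ)⁻¹ * sInf S := by
            rw [Finset.sum_const, Finset.card_univ, Fintype.card_fin,
              nsmul_eq_mul]
            field_simp
        _ = ∑ i, sInf ((fun x => f i x + ((∑ j, f j x) / N - f i x)) '' X) := by
            refine Finset.sum_congr rfl fun i _ => ?_
            rw [himg i, hinf]
  · -- upper bound
    rintro d ⟨g, hg0, hgbdd, rfl⟩
    apply le_csInf hSne
    rintro y ⟨x, hx, rfl⟩
    have : ∑ i, sInf ((fun x => f i x + g i x) '' X)
        ≤ ∑ i, (f i x + g i x) := by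
      refine Finset.sum_le_sum fun i _ => ?_
      exact csInf_le (hgbdd i) ⟨x, hx, rfl⟩
    calc ∑ i, sInf ((fun x => f i x + g i x) '' X) ≤ ∑ i, (f i x + g i x) := this
      _ = ∑ i, f i x := by rw [Finset.sum_add_distrib, hg0 x hx, add_zero]
end

section
/- Dual representation of standard dual decomposition over a finite set: Let X be a nonempty finite subset of ℝ^n, N ≥ 1, and f_i : X → ℝ for i = 1,…,N. Then sup over all λ_1,…,λ_N ∈ ℝ^n with ∑_{i=1}^N λ_i = 0 of ∑_{i=1}^N min_{x ∈ X} (f_i(x) + ⟨λ_i, x⟩) equals the minimum, over all families (μ_i)_{i=1}^N of probability weights on X (μ_i : X → [0,1] with ∑_{x∈X} μ_i(x) = 1) that share a common barycenter (∑_{x∈X} μ_i(x)·x is the same vector for all i), of ∑_{i=1}^N ∑_{x∈X} μ_i(x) f_i(x). (This minimum is min_{x ∈ conv(X)} ∑_{i=1}^N co(f_i)(x), where co(f_i) denotes the convex envelope of f_i over X.) -/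
open Finset
open scoped Classical

private lemma dd_weak_dual {n N : ℕ} (X : Finset (EuclideanSpace ℝ (Fin n))) (hX : X.Nonempty)
    (f : Fin N → EuclideanSpace ℝ (Fin n) → ℝ)
    (μ : Fin N → EuclideanSpace ℝ (Fin n) → ℝ)
    (hμ0 : ∀ i, ∀ x ∈ X, 0 ≤ μ i x)
    (hμ1 : ∀ i, ∑ x ∈ X, μ i x = 1)
    (z : EuclideanSpace ℝ (Fin n))
    (hbar : ∀ i, ∑ x ∈ X, μ i x • x = z)
    (lam : Fin N → EuclideanSpace ℝ (Fin n)) (hlam : ∑ i, lam i = 0) :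
    ∑ i, X.inf' hX (fun x => f i x + (inner ℝ (lam i) x : ℝ)) ≤ ∑ i, ∑ x ∈ X, μ i x * f i x := by
  have key : ∀ i, X.inf' hX (fun x => f i x + (inner ℝ (lam i) x : ℝ))
      ≤ (∑ x ∈ X, μ i x * f i x) + inner ℝ (lam i) z := by
    intro i
    have h1 : X.inf' hX (fun x => f i x + (inner ℝ (lam i) x : ℝ))
        = ∑ x ∈ X, μ i x * X.inf' hX (fun x => f i x + (inner ℝ (lam i) x : ℝ)) := by
      rw [← Finset.sum_mul, hμ1 i, one_mul]
    have h2 : ∑ x ∈ X, μ i x * X.inf' hX (fun x => f i x + (inner ℝ (lam i) x : ℝ))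
        ≤ ∑ x ∈ X, μ i x * (f i x + (inner ℝ (lam i) x : ℝ)) := by
      refine Finset.sum_le_sum fun x hx => ?_
      exact mul_le_mul_of_nonneg_left (Finset.inf'_le _ hx) (hμ0 i x hx)
    have h3 : ∑ x ∈ X, μ i x * (f i x + (inner ℝ (lam i) x : ℝ))
        = (∑ x ∈ X, μ i x * f i x) + inner ℝ (lam i) z := by
      rw [← hbar i, inner_sum]
      rw [← Finset.sum_add_distrib]
      refine Finset.sum_congr rfl fun x hx => ?_
      rw [real_inner_smul_right]
      ring
    calc X.inf' hX (fun x => f i x + (inner ℝ (lam i) x : ℝ))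
        = ∑ x ∈ X, μ i x * X.inf' hX (fun x => f i x + (inner ℝ (lam i) x : ℝ)) := h1
      _ ≤ ∑ x ∈ X, μ i x * (f i x + (inner ℝ (lam i) x : ℝ)) := h2
      _ = (∑ x ∈ X, μ i x * f i x) + inner ℝ (lam i) z := h3
  calc ∑ i, X.inf' hX (fun x => f i x + (inner ℝ (lam i) x : ℝ))
      ≤ ∑ i, ((∑ x ∈ X, μ i x * f i x) + (inner ℝ (lam i) z : ℝ)) := Finset.sum_le_sum fun i _ => key i
    _ = (∑ i, ∑ x ∈ X, μ i x * f i x) + (inner ℝ (∑ i, lam i) z : ℝ) := by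
        rw [Finset.sum_add_distrib, sum_inner]
    _ = ∑ i, ∑ x ∈ X, μ i x * f i x := by rw [hlam, inner_zero_left, add_zero]

private lemma dd_primal_of_C {n N : ℕ} (X : Finset (EuclideanSpace ℝ (Fin n)))
    (f : Fin N → EuclideanSpace ℝ (Fin n) → ℝ)
    (b : (Fin N → EuclideanSpace ℝ (Fin n)) × ℝ)
    (hb : b ∈ convexHull ℝ
      (((Fintype.piFinset fun _ : Fin N => X).image
        (fun σ => (σ, ∑ i, f i (σ i))) : Finset ((Fin N → EuclideanSpace ℝ (Fin n)) × ℝ)) : Set _)) :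
    ∃ μ : Fin N → EuclideanSpace ℝ (Fin n) → ℝ,
      (∀ i, ∀ x ∈ X, 0 ≤ μ i x ∧ μ i x ≤ 1) ∧
      (∀ i, ∑ x ∈ X, μ i x = 1) ∧
      (∀ i, ∑ x ∈ X, μ i x • x = b.1 i) ∧
      b.2 = ∑ i, ∑ x ∈ X, μ i x * f i x := by
  rw [Finset.convexHull_eq] at hb
  obtain ⟨w, hw0, hw1, hwc⟩ := hb
  rw [Finset.centerMass_eq_of_sum_1 _ _ hw1] at hwc
  have hginj : ∀ σ ∈ (Fintype.piFinset fun _ : Fin N => X),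
      ∀ τ ∈ (Fintype.piFinset fun _ : Fin N => X),
      (fun σ => (σ, ∑ i, f i (σ i))) σ = (fun σ => (σ, ∑ i, f i (σ i))) τ → σ = τ := by
    intro σ _ τ _ h
    exact congrArg Prod.fst h
  rw [Finset.sum_image hginj] at hw1
  rw [Finset.sum_image hginj] at hwc
  simp only [id_eq] at hwc
  set P : Finset (Fin N → EuclideanSpace ℝ (Fin n)) := Fintype.piFinset fun _ : Fin N => X with hP
  set w' : (Fin N → EuclideanSpace ℝ (Fin n)) → ℝ :=
    fun σ => w (σ, ∑ i, f i (σ i)) with hw'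
  have hw'0 : ∀ σ ∈ P, 0 ≤ w' σ := by
    intro σ hσ
    exact hw0 _ (Finset.mem_image_of_mem _ hσ)
  have hmem : ∀ σ ∈ P, ∀ i, σ i ∈ X := fun σ hσ => Fintype.mem_piFinset.mp hσ
  refine ⟨fun i x => ∑ σ ∈ P.filter (fun σ => σ i = x), w' σ, ?_, ?_, ?_, ?_⟩
  · intro i x hx
    refine ⟨Finset.sum_nonneg fun σ hσ => hw'0 σ (Finset.mem_filter.mp hσ).1, ?_⟩
    rw [← hw1]
    exact Finset.sum_le_sum_of_subset_of_nonneg (Finset.filter_subset _ _)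
      (fun σ hσ _ => hw'0 σ hσ)
  · intro i
    dsimp only
    rw [Finset.sum_fiberwise_of_maps_to (fun σ hσ => hmem σ hσ i) w']
    exact hw1
  · intro i
    dsimp only
    have h1 : ∑ x ∈ X, (∑ σ ∈ P.filter (fun σ => σ i = x), w' σ) • x
        = ∑ x ∈ X, ∑ σ ∈ P.filter (fun σ => σ i = x), w' σ • σ i := by
      refine Finset.sum_congr rfl fun x hx => ?_
      rw [Finset.sum_smul]
      exact Finset.sum_congr rfl fun σ hσ => by rw [(Finset.mem_filter.mp hσ).2]
    rw [h1, Finset.sum_fiberwise_of_maps_to (fun σ hσ => hmem σ hσ i)]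
    have := congrArg (fun p => p.1 i) hwc
    simpa [Prod.fst_sum] using this
  · have h2 := congrArg Prod.snd hwc
    simp only [Prod.snd_sum, Prod.smul_snd, smul_eq_mul] at h2
    rw [← h2]
    have h3 : ∀ i : Fin N, ∑ x ∈ X, (∑ σ ∈ P.filter (fun σ => σ i = x), w' σ) * f i x
        = ∑ σ ∈ P, w' σ * f i (σ i) := by
      intro i
      have h4 : ∀ x ∈ X, (∑ σ ∈ P.filter (fun σ => σ i = x), w' σ) * f i x
          = ∑ σ ∈ P.filter (fun σ => σ i = x), w' σ * f i (σ i) := by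
        intro x hx
        rw [Finset.sum_mul]
        exact Finset.sum_congr rfl fun σ hσ => by rw [(Finset.mem_filter.mp hσ).2]
      rw [Finset.sum_congr rfl h4, Finset.sum_fiberwise_of_maps_to (fun σ hσ => hmem σ hσ i)]
    dsimp only
    rw [Finset.sum_congr rfl fun i _ => h3 i, Finset.sum_comm]
    exact Finset.sum_congr rfl fun σ _ => by rw [Finset.mul_sum]

/-- Dual representation of standard dual decomposition over a finite set:
the optimal value of the Lagrangian dual equals the minimum, over families of
probability weights on `X` sharing a common barycenter, of the corresponding
weighted sums of the `f i`. -/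
theorem dd_dual_representation (n : ℕ) (N : ℕ) (hN : 1 ≤ N)
    (X : Finset (EuclideanSpace ℝ (Fin n))) (hX : X.Nonempty)
    (f : Fin N → EuclideanSpace ℝ (Fin n) → ℝ) :
    IsLeast
      {d : ℝ | ∃ μ : Fin N → EuclideanSpace ℝ (Fin n) → ℝ,
        (∀ i, ∀ x ∈ X, 0 ≤ μ i x ∧ μ i x ≤ 1) ∧
        (∀ i, ∑ x ∈ X, μ i x = 1) ∧
        (∀ i j, ∑ x ∈ X, μ i x • x = ∑ x ∈ X, μ j x • x) ∧
        d = ∑ i, ∑ x ∈ X, μ i x * f i x}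
      (sSup {d : ℝ | ∃ lam : Fin N → EuclideanSpace ℝ (Fin n),
        ∑ i, lam i = 0 ∧
        d = ∑ i, X.inf' hX (fun x => f i x + (inner ℝ (lam i) x : ℝ))}) := by
  obtain ⟨x0, hx0⟩ := id hX
  set Pset := {d : ℝ | ∃ μ : Fin N → EuclideanSpace ℝ (Fin n) → ℝ,
        (∀ i, ∀ x ∈ X, 0 ≤ μ i x ∧ μ i x ≤ 1) ∧
        (∀ i, ∑ x ∈ X, μ i x = 1) ∧
        (∀ i j, ∑ x ∈ X, μ i x • x = ∑ x ∈ X, μ j x • x) ∧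
        d = ∑ i, ∑ x ∈ X, μ i x * f i x} with hPset
  set Dset := {d : ℝ | ∃ lam : Fin N → EuclideanSpace ℝ (Fin n),
        ∑ i, lam i = 0 ∧
        d = ∑ i, X.inf' hX (fun x => f i x + (inner ℝ (lam i) x : ℝ))} with hDset
  let i0 : Fin N := ⟨0, hN⟩
  set gm : (Fin N → EuclideanSpace ℝ (Fin n)) → (Fin N → EuclideanSpace ℝ (Fin n)) × ℝ :=
    fun σ => (σ, ∑ i, f i (σ i)) with hgm
  set S : Finset ((Fin N → EuclideanSpace ℝ (Fin n)) × ℝ) :=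
    (Fintype.piFinset fun _ : Fin N => X).image gm with hS
  set C : Set ((Fin N → EuclideanSpace ℝ (Fin n)) × ℝ) := convexHull ℝ ↑S with hC
  have hCcpt : IsCompact C := S.finite_toSet.isCompact_convexHull ℝ
  have hCconv : Convex ℝ C := convex_convexHull ℝ _
  have hSC : (↑S : Set _) ⊆ C := subset_convexHull ℝ _
  have hDiagCl : IsClosed {b : (Fin N → EuclideanSpace ℝ (Fin n)) × ℝ | ∀ i, b.1 i = b.1 i0} := by
    have heq : {b : (Fin N → EuclideanSpace ℝ (Fin n)) × ℝ | ∀ i, b.1 i = b.1 i0}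
        = ⋂ i, {b : (Fin N → EuclideanSpace ℝ (Fin n)) × ℝ | b.1 i = b.1 i0} := by
      ext b; simp [Set.mem_iInter]
    rw [heq]
    exact isClosed_iInter fun i => isClosed_eq
      ((continuous_apply i).comp continuous_fst) ((continuous_apply i0).comp continuous_fst)
  have hKcpt : IsCompact (C ∩ {b | ∀ i, b.1 i = b.1 i0}) := hCcpt.inter_right hDiagCl
  have hdiagmem : ∀ x ∈ X, gm (fun _ => x) ∈ C ∩ {b | ∀ i, b.1 i = b.1 i0} := by
    intro x hx
    refine ⟨hSC ?_, fun i => rfl⟩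
    exact Finset.mem_coe.mpr (Finset.mem_image_of_mem gm (Fintype.mem_piFinset.mpr fun _ => hx))
  obtain ⟨bstar, hbstar, hbmin⟩ := hKcpt.exists_isMinOn ⟨_, hdiagmem x0 hx0⟩
    (continuous_snd.continuousOn (s := C ∩ {b | ∀ i, b.1 i = b.1 i0}))
  rw [isMinOn_iff] at hbmin
  set pstar := bstar.2 with hpstar
  obtain ⟨μs, hμs01, hμs1, hμsbar, hμsobj⟩ := dd_primal_of_C X f bstar hbstar.1
  have hμsfeas : ∀ i j, ∑ x ∈ X, μs i x • x = ∑ x ∈ X, μs j x • x := by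
    intro i j
    rw [hμsbar i, hμsbar j, hbstar.2 i, hbstar.2 j]
  have hpstarP : pstar ∈ Pset := ⟨μs, hμs01, hμs1, hμsfeas, hμsobj⟩
  have hweak : ∀ d ∈ Dset, ∀ p ∈ Pset, d ≤ p := by
    rintro d ⟨lam, hlam, rfl⟩ p ⟨μ, hμ01, hμ1, hbar, rfl⟩
    exact dd_weak_dual X hX f μ (fun i x hx => (hμ01 i x hx).1) hμ1
      (∑ x ∈ X, μ i0 x • x) (fun i => hbar i i0) lam hlam
  have hDne : Dset.Nonempty :=
    ⟨_, fun _ => (0 : EuclideanSpace ℝ (Fin n)), by simp, rfl⟩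
  have hDbdd : BddAbove Dset := ⟨pstar, fun d hd => hweak d hd pstar hpstarP⟩
  have hstrong : ∀ ε : ℝ, 0 < ε → pstar - ε ≤ sSup Dset := by
    intro ε hε
    set Eset : Set ((Fin N → EuclideanSpace ℝ (Fin n)) × ℝ) :=
      {b | (∀ i, b.1 i = b.1 i0) ∧ b.2 ≤ pstar - ε} with hEsetdef
    have hEcl : IsClosed Eset := by
      have heq : Eset = {b : (Fin N → EuclideanSpace ℝ (Fin n)) × ℝ | ∀ i, b.1 i = b.1 i0}
          ∩ {b | b.2 ≤ pstar - ε} := rfl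
      rw [heq]
      exact hDiagCl.inter (isClosed_le continuous_snd continuous_const)
    have hEconv : Convex ℝ Eset := by
      rintro p ⟨hp1, hp2⟩ q ⟨hq1, hq2⟩ a c ha hc hac
      constructor
      · intro i
        show (a • p + c • q).1 i = (a • p + c • q).1 i0
        simp only [Prod.fst_add, Prod.smul_fst, Pi.add_apply, Pi.smul_apply]
        rw [hp1 i, hq1 i]
      · show (a • p + c • q).2 ≤ pstar - ε
        simp only [Prod.snd_add, Prod.smul_snd, smul_eq_mul]
        calc a * p.2 + c * q.2 ≤ a * (pstar - ε) + c * (pstar - ε) :=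
              add_le_add (mul_le_mul_of_nonneg_left hp2 ha) (mul_le_mul_of_nonneg_left hq2 hc)
          _ = (a + c) * (pstar - ε) := by ring
          _ = pstar - ε := by rw [hac, one_mul]
    have hdisj : Disjoint C Eset := by
      rw [Set.disjoint_left]
      rintro b hbC ⟨hbdiag, hble⟩
      have := hbmin b ⟨hbC, hbdiag⟩
      linarith
    obtain ⟨φ, u, v, hφC, huv, hφE⟩ :=
      geometric_hahn_banach_compact_closed hCconv hCcpt hEconv hEcl hdisj
    -- construct the multipliers from φ
    let Lsing : Fin N → (EuclideanSpace ℝ (Fin n)) →ₗ[ℝ]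
        ((Fin N → EuclideanSpace ℝ (Fin n)) × ℝ) := fun i =>
      { toFun := fun z => (Pi.single i z, 0)
        map_add' := fun a b => by
          refine Prod.ext ?_ ?_
          · simp [Pi.single_add]
          · simp
        map_smul' := fun c a => by
          refine Prod.ext ?_ ?_
          · simp [Pi.single_smul]
          · simp }
    set lam : Fin N → EuclideanSpace ℝ (Fin n) := fun i =>
      (InnerProductSpace.toDual ℝ (EuclideanSpace ℝ (Fin n))).symm
        (φ.comp (LinearMap.toContinuousLinearMap (Lsing i))) with hlamdef
    have hlam_inner : ∀ (i : Fin N) (z : EuclideanSpace ℝ (Fin n)),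
        (inner ℝ (lam i) z : ℝ) = φ (Pi.single i z, 0) := by
      intro i z
      rw [hlamdef]
      rw [InnerProductSpace.toDual_symm_apply]
      simp [Lsing]
    set β : ℝ := φ ((0 : Fin N → EuclideanSpace ℝ (Fin n)), (1 : ℝ)) with hβdef
    have hφdecomp : ∀ (w : Fin N → EuclideanSpace ℝ (Fin n)) (t : ℝ),
        φ (w, t) = (∑ i, (inner ℝ (lam i) (w i) : ℝ)) + t * β := by
      intro w t
      have h1 : ((w, t) : (Fin N → EuclideanSpace ℝ (Fin n)) × ℝ)
          = (∑ i, (Pi.single i (w i), (0 : ℝ)))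
            + t • ((0 : Fin N → EuclideanSpace ℝ (Fin n)), (1 : ℝ)) := by
        refine Prod.ext ?_ ?_
        · simp [Prod.fst_sum, Finset.univ_sum_single]
        · simp [Prod.snd_sum]
      rw [h1, map_add, map_sum, map_smul]
      simp only [smul_eq_mul]
      congr 1
      exact Finset.sum_congr rfl fun i _ => (hlam_inner i (w i)).symm
    have hEpt : ∀ (z : EuclideanSpace ℝ (Fin n)) (t : ℝ), t ≤ pstar - ε →
        v < (∑ i, (inner ℝ (lam i) z : ℝ)) + t * β := by
      intro z t ht
      have hmem : ((fun _ => z, t) : (Fin N → EuclideanSpace ℝ (Fin n)) × ℝ) ∈ Eset :=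
        ⟨fun i => rfl, ht⟩
      have h := hφE _ hmem
      rwa [hφdecomp] at h
    have hΛ : ∑ i, lam i = 0 := by
      by_contra hne
      have hnorm : (0 : ℝ) < ‖∑ i, lam i‖ ^ 2 := by
        have : ‖∑ i, lam i‖ ≠ 0 := norm_ne_zero_iff.mpr hne
        positivity
      set c : ℝ := (v - (pstar - ε) * β - 1) / ‖∑ i, lam i‖ ^ 2 with hcdef
      have h := hEpt (c • ∑ i, lam i) (pstar - ε) le_rfl
      have hsum : ∑ i, (inner ℝ (lam i) (c • ∑ j, lam j) : ℝ) = c * ‖∑ i, lam i‖ ^ 2 := by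
        rw [← sum_inner, real_inner_smul_right, real_inner_self_eq_norm_sq]
      rw [hsum, hcdef, div_mul_cancel₀ _ (ne_of_gt hnorm)] at h
      linarith
    have hβle : β ≤ 0 := by
      by_contra hpos
      push_neg at hpos
      have h := hEpt 0 (min (pstar - ε) ((v - 1) / β)) (min_le_left _ _)
      simp only [inner_zero_right, Finset.sum_const_zero, zero_add] at h
      have h2 : min (pstar - ε) ((v - 1) / β) * β ≤ v - 1 := by
        calc min (pstar - ε) ((v - 1) / β) * β ≤ ((v - 1) / β) * β :=
              mul_le_mul_of_nonneg_right (min_le_right _ _) hpos.le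
          _ = v - 1 := div_mul_cancel₀ _ (ne_of_gt hpos)
      linarith
    have hβne : β ≠ 0 := by
      intro h0
      have ha := hφC (gm (fun _ => x0)) (hdiagmem x0 hx0).1
      have hφa : φ (gm (fun _ => x0)) = 0 := by
        rw [hgm]
        rw [hφdecomp]
        rw [← sum_inner, hΛ, inner_zero_left, h0, mul_zero, add_zero]
      have hb := hEpt x0 (pstar - ε) le_rfl
      rw [← sum_inner, hΛ, inner_zero_left, h0, mul_zero, add_zero] at hb
      rw [hφa] at ha
      linarith
    have hβneg : β < 0 := lt_of_le_of_ne hβle hβne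
    have hβinv : β⁻¹ < 0 := inv_lt_zero.mpr hβneg
    set lamh : Fin N → EuclideanSpace ℝ (Fin n) := fun i => β⁻¹ • lam i with hlamh
    have hlamh0 : ∑ i, lamh i = 0 := by
      rw [hlamh, ← Finset.smul_sum, hΛ, smul_zero]
    have hxm : ∀ i, ∃ x, x ∈ X ∧
        X.inf' hX (fun x => f i x + (inner ℝ (lamh i) x : ℝ)) = f i x + (inner ℝ (lamh i) x : ℝ) :=
      fun i => Finset.exists_mem_eq_inf' hX _
    choose xm hxmX hxmEq using hxm
    have hσ : xm ∈ Fintype.piFinset fun _ : Fin N => X := Fintype.mem_piFinset.mpr hxmX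
    have hgmC : gm xm ∈ C := hSC (Finset.mem_coe.mpr (Finset.mem_image_of_mem gm hσ))
    have hkey : φ (gm xm) < u := hφC _ hgmC
    have hkey2 : v < (pstar - ε) * β := by
      have h := hEpt 0 (pstar - ε) le_rfl
      simpa only [inner_zero_right, Finset.sum_const_zero, zero_add] using h
    have hφgm : φ (gm xm) = (∑ i, (inner ℝ (lam i) (xm i) : ℝ)) + (∑ i, f i (xm i)) * β := by
      rw [hgm, hφdecomp]
    have h5 : (∑ i, (inner ℝ (lam i) (xm i) : ℝ)) + (∑ i, f i (xm i)) * β < (pstar - ε) * β := by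
      rw [← hφgm]
      linarith
    set dval := ∑ i, X.inf' hX (fun x => f i x + (inner ℝ (lamh i) x : ℝ)) with hdval
    have hdval_eq : dval = (∑ i, f i (xm i)) + β⁻¹ * ∑ i, (inner ℝ (lam i) (xm i) : ℝ) := by
      rw [hdval, Finset.sum_congr rfl fun i _ => hxmEq i, Finset.sum_add_distrib, Finset.mul_sum]
      congr 1
      refine Finset.sum_congr rfl fun i _ => ?_
      rw [hlamh]
      exact real_inner_smul_left _ _ _
    have hlt : pstar - ε < dval := by
      have h6 := mul_lt_mul_of_neg_left h5 hβinv
      have h7 : β⁻¹ * ((pstar - ε) * β) = pstar - ε := by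
        field_simp
      have h8 : β⁻¹ * ((∑ i, (inner ℝ (lam i) (xm i) : ℝ)) + (∑ i, f i (xm i)) * β)
          = β⁻¹ * (∑ i, (inner ℝ (lam i) (xm i) : ℝ)) + ∑ i, f i (xm i) := by
        field_simp
      rw [h7, h8] at h6
      rw [hdval_eq]
      linarith
    have hdmem : dval ∈ Dset := ⟨lamh, hlamh0, hdval⟩
    have := le_csSup hDbdd hdmem
    linarith
  have hsup_le : sSup Dset ≤ pstar := csSup_le hDne fun d hd => hweak d hd pstar hpstarP
  have hle_sup : pstar ≤ sSup Dset := by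
    refine le_of_forall_pos_le_add fun ε hε => ?_
    have := hstrong ε hε
    linarith
  have hsupeq : sSup Dset = pstar := le_antisymm hsup_le hle_sup
  constructor
  · rw [hsupeq]
    exact hpstarP
  · intro p hp
    exact csSup_le hDne fun d hd => hweak d hd p hp
end

section
/- Lower-semicontinuous hull of a piecewise constant function on a finite partition: Let T be a topological space, K ≥ 1, and let P_1,…,P_K ⊆ T be pairwise disjoint sets with union X := ⋃_{k=1}^K P_k. Let c_1,…,c_K ∈ ℝ and let g : T → ℝ satisfy g(x) = c_k whenever x ∈ P_k. Then for every x ∈ X, the liminf of g along 𝓝[X] x equals min { c_k : 1 ≤ k ≤ K, x ∈ closure(P_k) } (this indexing set is nonempty since x ∈ X). -/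
/-- The lower-semicontinuous hull of a piecewise constant function on a finite
partition: at any point of the union, the liminf within the union is the minimum
of the constants over the pieces whose closure contains the point. -/
theorem lsc_piecewise_constant {T : Type*} [TopologicalSpace T]
    (K : ℕ) (hK : 1 ≤ K) (P : Fin K → Set T)
    (hdisj : ∀ k l, k ≠ l → Disjoint (P k) (P l))
    (c : Fin K → ℝ) (g : T → ℝ)
    (hg : ∀ k, ∀ x ∈ P k, g x = c k) :
    ∀ x ∈ ⋃ k, P k,
      IsLeast {r : ℝ | ∃ k, x ∈ closure (P k) ∧ c k = r}
        (Filter.liminf g (nhdsWithin x (⋃ k, P k))) := by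
  classical
  intro x hx
  set X : Set T := ⋃ k, P k with hX
  obtain ⟨k0, hk0⟩ := Set.mem_iUnion.mp hx
  haveI hne : (nhdsWithin x X).NeBot :=
    mem_closure_iff_nhdsWithin_neBot.mp (subset_closure hx)
  set S : Finset (Fin K) := Finset.univ.filter (fun k => x ∈ closure (P k)) with hS
  have hmemS : ∀ k, k ∈ S ↔ x ∈ closure (P k) := by
    intro k; simp [hS]
  have hk0S : k0 ∈ S := (hmemS k0).mpr (subset_closure hk0)
  have hSne : S.Nonempty := ⟨k0, hk0S⟩
  -- eventually, points of X lie in a piece whose closure contains x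
  have hA : ∀ᶠ y in nhdsWithin x X, ∃ k ∈ S, y ∈ P k := by
    have h1 : ∀ᶠ y in nhds x, ∀ k, k ∉ S → y ∉ P k := by
      rw [Filter.eventually_all]
      intro k
      by_cases hkS : k ∈ S
      · filter_upwards with y h; exact absurd hkS h
      · have hxc : x ∈ (closure (P k))ᶜ := fun h => hkS ((hmemS k).mpr h)
        have : (closure (P k))ᶜ ∈ nhds x :=
          (isClosed_closure.isOpen_compl).mem_nhds hxc
        filter_upwards [this] with y hy _ hyP
        exact hy (subset_closure hyP)
    have h2 : ∀ᶠ y in nhdsWithin x X, y ∈ X := self_mem_nhdsWithin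
    filter_upwards [h1.filter_mono nhdsWithin_le_nhds, h2] with y hy1 hy2
    obtain ⟨k, hk⟩ := Set.mem_iUnion.mp hy2
    by_cases hkS : k ∈ S
    · exact ⟨k, hkS, hk⟩
    · exact absurd hk (hy1 k hkS)
  -- bounds on g
  set m : ℝ := S.inf' hSne c with hm
  set M : ℝ := S.sup' hSne c with hM
  have hgm : ∀ᶠ y in nhdsWithin x X, m ≤ g y := by
    filter_upwards [hA] with y ⟨k, hkS, hk⟩
    rw [hg k y hk]; exact Finset.inf'_le c hkS
  have hgM : ∀ᶠ y in nhdsWithin x X, g y ≤ M := by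
    filter_upwards [hA] with y ⟨k, hkS, hk⟩
    rw [hg k y hk]; exact Finset.le_sup' c hkS
  have hbdd : Filter.IsBoundedUnder (· ≥ ·) (nhdsWithin x X) g := ⟨m, hgm⟩
  have hcobdd : Filter.IsCoboundedUnder (· ≥ ·) (nhdsWithin x X) g :=
    Filter.IsBoundedUnder.isCoboundedUnder_ge ⟨M, hgM⟩
  -- liminf ≤ c k for every k ∈ S
  have hle : ∀ k ∈ S, Filter.liminf g (nhdsWithin x X) ≤ c k := by
    intro k hkS
    haveI : (nhdsWithin x (P k)).NeBot :=
      mem_closure_iff_nhdsWithin_neBot.mp ((hmemS k).mp hkS)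
    have hfreq : ∃ᶠ y in nhdsWithin x X, g y ≤ c k := by
      have hev : ∀ᶠ y in nhdsWithin x (P k), g y ≤ c k := by
        filter_upwards [self_mem_nhdsWithin] with y hy
        exact le_of_eq (hg k y hy)
      exact hev.frequently.filter_mono
        (nhdsWithin_mono x (Set.subset_iUnion P k))
    exact Filter.liminf_le_of_frequently_le hfreq hbdd
  have hge : m ≤ Filter.liminf g (nhdsWithin x X) :=
    Filter.le_liminf_of_le hcobdd hgm
  obtain ⟨k1, hk1S, hk1⟩ := Finset.exists_mem_eq_inf' hSne c
  have heq : Filter.liminf g (nhdsWithin x X) = m :=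
    le_antisymm (by rw [hm, hk1]; exact hle k1 hk1S) hge
  constructor
  · exact ⟨k1, (hmemS k1).mp hk1S, by rw [heq, hm]; exact hk1.symm⟩
  · rintro r ⟨k, hkc, rfl⟩
    exact hle k ((hmemS k).mpr hkc)
end

section
/- Minimizing f plus a regularizer equals minimizing f plus its lower-semicontinuous hull: Let T be a topological space, X ⊆ T nonempty, f : T → ℝ continuous on X, and g : T → ℝ bounded below on X with f also bounded below on X. Define lsc(g)(x) := liminf of g along 𝓝[X] x for x ∈ X. Then inf_{x ∈ X} (f(x) + g(x)) = inf_{x ∈ X} (f(x) + lsc(g)(x)). -/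
open Filter

/-- Minimizing `f` plus a regularizer equals minimizing `f` plus the
lower-semicontinuous hull of the regularizer. -/
theorem inf_add_lsc {T : Type*} [TopologicalSpace T] (X : Set T) (hX : X.Nonempty)
    (f g : T → ℝ) (hf : ContinuousOn f X)
    (hgb : BddBelow (g '' X)) (hfb : BddBelow (f '' X)) :
    sInf ((fun x => f x + g x) '' X)
      = sInf ((fun x => f x + Filter.liminf g (nhdsWithin x X)) '' X) := by
  obtain ⟨cg, hcg⟩ := hgb
  obtain ⟨cf, hcf⟩ := hfb
  simp only [mem_lowerBounds, Set.forall_mem_image] at hcg hcf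
  set m := sInf ((fun x => f x + g x) '' X) with hm
  have hbdd : BddBelow ((fun x => f x + g x) '' X) := by
    refine ⟨cf + cg, ?_⟩
    rintro _ ⟨x, hx, rfl⟩
    exact add_le_add (hcf hx) (hcg hx)
  -- key facts for each x ∈ X
  have key : ∀ x ∈ X, m ≤ f x + Filter.liminf g (nhdsWithin x X) ∧
      f x + Filter.liminf g (nhdsWithin x X) ≤ f x + g x := by
    intro x hx
    haveI : (nhdsWithin x X).NeBot :=
      mem_closure_iff_nhdsWithin_neBot.mp (subset_closure hx)
    have hmemX : ∀ᶠ y in nhdsWithin x X, y ∈ X := self_mem_nhdsWithin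
    have hbdg : IsBoundedUnder (· ≥ ·) (nhdsWithin x X) g :=
      ⟨cg, hmemX.mono fun y hy => hcg hy⟩
    have hcob : IsCoboundedUnder (· ≥ ·) (nhdsWithin x X) g := by
      refine ⟨g x, fun a ha => ?_⟩
      have hxmem : {y | a ≤ g y} ∈ nhdsWithin x X := ha
      exact (pure_le_nhdsWithin hx) hxmem
    constructor
    · -- m ≤ f x + liminf
      have hten : Tendsto (fun y => m - f y) (nhdsWithin x X) (nhds (m - f x)) :=
        tendsto_const_nhds.sub (hf x hx)
      have h1 : Filter.liminf (fun y => m - f y) (nhdsWithin x X) = m - f x :=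
        hten.liminf_eq
      have h2 : Filter.liminf (fun y => m - f y) (nhdsWithin x X) ≤
          Filter.liminf g (nhdsWithin x X) := by
        refine liminf_le_liminf ?_ (hten.isBoundedUnder_ge) hcob
        refine hmemX.mono fun y hy => ?_
        have : m ≤ f y + g y := csInf_le hbdd ⟨y, hy, rfl⟩
        linarith
      linarith [h1 ▸ h2]
    · -- liminf ≤ g x
      have : Filter.liminf g (nhdsWithin x X) ≤ g x := by
        refine liminf_le_of_frequently_le ?_ hbdg
        exact (Filter.Eventually.frequently (f := pure x) ((Filter.eventually_pure (a := x) (p := fun y => g y ≤ g x)).mpr le_rfl)).filter_mono (pure_le_nhdsWithin hx)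
      linarith
  have hLbdd : BddBelow ((fun x => f x + Filter.liminf g (nhdsWithin x X)) '' X) := by
    refine ⟨m, ?_⟩
    rintro _ ⟨x, hx, rfl⟩
    exact (key x hx).1
  refine le_antisymm ?_ ?_
  · refine le_csInf (hX.image _) ?_
    rintro _ ⟨x, hx, rfl⟩
    exact (key x hx).1
  · refine le_csInf (hX.image _) ?_
    rintro _ ⟨x, hx, rfl⟩
    exact le_trans (csInf_le hLbdd ⟨x, hx, rfl⟩) (key x hx).2
end

section
/- Near-optimality of piecewise constant regularizers: Let X be a nonempty compact subset of ℝ^n, N ≥ 1, and let f_i : X → ℝ be Lipschitz continuous on X for i = 1,…,N; set v* := inf_{x∈X} ∑_{i=1}^N f_i(x) and g*_i(x) := (1/N)∑_{j=1}^N f_j(x) − f_i(x). Then for every ε > 0 there exists a map π : X → X with finite range such that, with the piecewise constant regularizers g_i := g*_i ∘ π (which satisfy ∑_{i=1}^N g_i(x) = 0 for all x ∈ X), one has ∑_{i=1}^N inf_{x ∈ X} (f_i(x) + g_i(x)) ≥ v* − ε. -/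
/-- Near-optimality of piecewise constant regularizers. -/
theorem piecewise_constant_near_optimal (n : ℕ) (N : ℕ) (hN : 1 ≤ N)
    (X : Set (EuclideanSpace ℝ (Fin n))) (hXne : X.Nonempty) (hXc : IsCompact X)
    (f : Fin N → EuclideanSpace ℝ (Fin n) → ℝ)
    (hf : ∀ i, ∃ K : NNReal, LipschitzOnWith K (f i) X)
    (gstar : Fin N → EuclideanSpace ℝ (Fin n) → ℝ)
    (hgstar : ∀ i x, gstar i x = (1 / (N : ℝ)) * ∑ j, f j x - f i x) :
    ∀ ε > (0 : ℝ), ∃ pr : EuclideanSpace ℝ (Fin n) → EuclideanSpace ℝ (Fin n),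
      Set.MapsTo pr X X ∧ (pr '' X).Finite ∧
      (∀ x ∈ X, ∑ i, gstar i (pr x) = 0) ∧
      sInf ((fun x => ∑ i, f i x) '' X) - ε ≤
        ∑ i, sInf ((fun x => f i x + gstar i (pr x)) '' X) := by
  classical
  intro ε hε
  obtain ⟨x0, hx0⟩ := hXne
  choose K hK using hf
  have hNpos : (0 : ℝ) < N := by positivity
  set C : ℝ := ∑ i, (K i : ℝ) + 1 with hC
  have hCpos : 0 < C := by positivity
  set δ : ℝ := ε / C with hδdef
  have hδ : 0 < δ := div_pos hε hCpos
  -- finite δ-net of X inside X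
  obtain ⟨t, htX, htfin, htcov⟩ :=
    hXc.totallyBounded.exists_subset (Metric.dist_mem_uniformity hδ)
  have hcover : ∀ x ∈ X, ∃ y, y ∈ t ∧ dist x y < δ := by
    intro x hx
    have := htcov hx
    simp only [Set.mem_iUnion, Set.mem_setOf_eq] at this
    obtain ⟨y, hy, hxy⟩ := this
    exact ⟨y, hy, hxy⟩
  let pr : EuclideanSpace ℝ (Fin n) → EuclideanSpace ℝ (Fin n) :=
    fun x => if h : x ∈ X then (hcover x h).choose else x0
  have hprt : ∀ x ∈ X, pr x ∈ t := by
    intro x hx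
    simp only [pr, dif_pos hx]
    exact (hcover x hx).choose_spec.1
  have hprX : ∀ x ∈ X, pr x ∈ X := fun x hx => htX (hprt x hx)
  have hprd : ∀ x ∈ X, dist x (pr x) < δ := by
    intro x hx
    simp only [pr, dif_pos hx]
    exact (hcover x hx).choose_spec.2
  -- continuity and boundedness
  have hcont : ∀ i, ContinuousOn (f i) X := fun i => (hK i).continuousOn
  have hsumcont : ContinuousOn (fun x => ∑ i, f i x) X :=
    continuousOn_finset_sum _ fun i _ => hcont i
  have hbdd : BddBelow ((fun x => ∑ i, f i x) '' X) :=
    (hXc.image_of_continuousOn hsumcont).bddBelow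
  set v : ℝ := sInf ((fun x => ∑ i, f i x) '' X) with hv
  have hvle : ∀ x ∈ X, v ≤ ∑ i, f i x := fun x hx =>
    csInf_le hbdd ⟨x, hx, rfl⟩
  -- lower bound for each regularized infimum
  have hinf : ∀ i : Fin N, v / N - (K i : ℝ) * δ ≤
      sInf ((fun x => f i x + gstar i (pr x)) '' X) := by
    intro i
    refine le_csInf ⟨_, ⟨x0, hx0, rfl⟩⟩ ?_
    rintro b ⟨x, hx, rfl⟩
    have hy : pr x ∈ X := hprX x hx
    have hdist : |f i x - f i (pr x)| ≤ (K i : ℝ) * δ := by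
      have := (hK i).dist_le_mul x hx (pr x) hy
      rw [Real.dist_eq] at this
      exact this.trans (mul_le_mul_of_nonneg_left (hprd x hx).le (K i).coe_nonneg)
    have h1 : f i x - f i (pr x) ≥ -((K i : ℝ) * δ) := by
      have := abs_le.mp hdist
      linarith [this.1]
    have h2 : v / N ≤ (1 / (N : ℝ)) * ∑ j, f j (pr x) := by
      rw [div_eq_mul_inv, mul_comm]
      rw [one_div]
      have := hvle (pr x) hy
      have hNinv : (0 : ℝ) ≤ ((N : ℝ))⁻¹ := by positivity
      exact mul_le_mul_of_nonneg_left this hNinv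
    show v / N - (K i : ℝ) * δ ≤ f i x + gstar i (pr x)
    rw [hgstar]
    linarith
  -- sum up
  have hsum : ∑ i, (v / N - (K i : ℝ) * δ) ≤
      ∑ i, sInf ((fun x => f i x + gstar i (pr x)) '' X) :=
    Finset.sum_le_sum fun i _ => hinf i
  have hlhs : ∑ i : Fin N, (v / N - (K i : ℝ) * δ) = v - (∑ i, (K i : ℝ)) * δ := by
    rw [Finset.sum_sub_distrib, Finset.sum_const, Finset.card_univ, Fintype.card_fin,
      ← Finset.sum_mul]
    congr 1
    rw [nsmul_eq_mul]; field_simp [hNpos.ne']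
  have hKC : (∑ i, (K i : ℝ)) * δ ≤ ε := by
    have hKle : (∑ i, (K i : ℝ)) ≤ C := by simp [hC]
    have : (∑ i, (K i : ℝ)) * δ ≤ C * δ :=
      mul_le_mul_of_nonneg_right hKle hδ.le
    have hCδ : C * δ = ε := by
      rw [hδdef]; field_simp
    linarith
  refine ⟨pr, fun x hx => hprX x hx, htfin.subset ?_, ?_, ?_⟩
  · rintro _ ⟨x, hx, rfl⟩; exact hprt x hx
  · intro x hx
    have hNne : (N : ℝ) ≠ 0 := hNpos.ne'
    simp only [hgstar, Finset.sum_sub_distrib, Finset.sum_const, Finset.card_univ,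
      Fintype.card_fin, nsmul_eq_mul]
    field_simp
    ring
  · linarith
end

section
/- Convergence of the GDD algorithm with Voronoi piecewise constant regularizers: Let X be a nonempty compact subset of a metric space, N ≥ 1, and let f_i : X → ℝ be Lipschitz continuous on X for i = 1,…,N; set v* := min_{x∈X} ∑_{i=1}^N f_i(x) and g*_i(x) := (1/N)∑_{j=1}^N f_j(x) − f_i(x). For each t ≥ 1 let X^t ⊆ X be a nonempty finite set with X^t ⊆ X^{t+1}, let π_t : X → X^t be a nearest-point map (π_t(x) ∈ X^t and dist(x, π_t(x)) ≤ dist(x, y) for all y ∈ X^t), define the regularizers g^t_i := g*_i ∘ π_t, and let x^i_t ∈ X minimize f_i + g^t_i over X; assume each solution is added to the point set, i.e., x^i_t ∈ X^{t+1} for all i and t. Then sup_{t≥1} ∑_{i=1}^N (f_i(x^i_t) + g^t_i(x^i_t)) = v*. -/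
/-- Convergence of the GDD algorithm with Voronoi piecewise constant regularizers. -/
theorem gdd_voronoi_convergence {α : Type*} [MetricSpace α]
    (X : Set α) (hXne : X.Nonempty) (hXc : IsCompact X)
    (N : ℕ) (hN : 1 ≤ N) (f : Fin N → α → ℝ)
    (hf : ∀ i, ∃ K : NNReal, LipschitzOnWith K (f i) X)
    (gstar : Fin N → α → ℝ)
    (hgstar : ∀ i x, gstar i x = (1 / (N : ℝ)) * ∑ j, f j x - f i x)
    (Xt : ℕ → Set α) (hfin : ∀ t, (Xt t).Finite) (hne : ∀ t, (Xt t).Nonempty)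
    (hsubX : ∀ t, Xt t ⊆ X) (hmono : ∀ t, Xt t ⊆ Xt (t + 1))
    (pr : ℕ → α → α)
    (hpr : ∀ t, ∀ x ∈ X, pr t x ∈ Xt t ∧ ∀ y ∈ Xt t, dist x (pr t x) ≤ dist x y)
    (xs : ℕ → Fin N → α) (hxs : ∀ t i, xs t i ∈ X)
    (hminz : ∀ t i, ∀ y ∈ X,
      f i (xs t i) + gstar i (pr t (xs t i)) ≤ f i y + gstar i (pr t y))
    (hadd : ∀ t i, xs t i ∈ Xt (t + 1)) :
    (⨆ t : ℕ, ∑ i, (f i (xs t i) + gstar i (pr t (xs t i)))) =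
      sInf ((fun x => ∑ i, f i x) '' X) := by
  classical
  set F : α → ℝ := fun x => ∑ i, f i x with hF
  choose K hK using hf
  have hNR : (N : ℝ) ≠ 0 := by
    have : 0 < (N : ℝ) := by exact_mod_cast hN
    linarith
  have hsumg : ∀ x, ∑ i, gstar i x = 0 := by
    intro x
    simp only [hgstar]
    rw [Finset.sum_sub_distrib, Finset.sum_const, Finset.card_univ, Fintype.card_fin,
      nsmul_eq_mul]
    field_simp
    ring
  have hFc : ContinuousOn F X := by
    apply continuousOn_finset_sum
    exact fun i _ => (hK i).continuousOn
  obtain ⟨xstar, hxstar, hmin⟩ := hXc.exists_isMinOn hXne hFc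
  have hminF : ∀ x ∈ X, F xstar ≤ F x := fun x hx => hmin hx
  have hv : sInf (F '' X) = F xstar := by
    apply IsLeast.csInf_eq
    exact ⟨⟨xstar, hxstar, rfl⟩, by rintro _ ⟨y, hy, rfl⟩; exact hminF y hy⟩
  set L : ℕ → ℝ := fun t => ∑ i, (f i (xs t i) + gstar i (pr t (xs t i))) with hL
  have hub : ∀ t, L t ≤ F xstar := by
    intro t
    calc L t ≤ ∑ i, (f i xstar + gstar i (pr t xstar)) :=
          Finset.sum_le_sum fun i _ => hminz t i xstar hxstar
      _ = F xstar + ∑ i, gstar i (pr t xstar) := by rw [Finset.sum_add_distrib]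
      _ = F xstar := by rw [hsumg]; ring
  have bdd : BddAbove (Set.range L) := ⟨F xstar, by rintro _ ⟨t, rfl⟩; exact hub t⟩
  rw [hv]
  refine le_antisymm (ciSup_le hub) ?_
  by_contra hcon
  push_neg at hcon
  set S := ⨆ t, L t with hSdef
  set ε := F xstar - S with hε
  have hεpos : 0 < ε := by simp only [hε]; linarith
  have hLS : ∀ t, L t ≤ S := fun t => le_ciSup bdd t
  -- lower bound on L t
  have key : ∀ t, F xstar - ∑ i, (K i : ℝ) * dist (xs t i) (pr t (xs t i)) ≤ L t := by
    intro t
    have hterm : ∀ i ∈ Finset.univ,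
        (1 / (N : ℝ)) * F xstar - (K i : ℝ) * dist (xs t i) (pr t (xs t i)) ≤
          f i (xs t i) + gstar i (pr t (xs t i)) := by
      intro i _
      have hpX : pr t (xs t i) ∈ X := hsubX t ((hpr t _ (hxs t i)).1)
      have hFx : F xstar ≤ F (pr t (xs t i)) := hminF _ hpX
      have hlip : |f i (xs t i) - f i (pr t (xs t i))| ≤
          (K i : ℝ) * dist (xs t i) (pr t (xs t i)) := by
        have := (hK i).dist_le_mul _ (hxs t i) _ hpX
        rwa [Real.dist_eq] at this
      have h1 := (abs_le.mp hlip).1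
      have h2 : (1 / (N : ℝ)) * F xstar ≤ (1 / (N : ℝ)) * ∑ j, f j (pr t (xs t i)) := by
        apply mul_le_mul_of_nonneg_left hFx
        positivity
      rw [hgstar]
      linarith
    have hsum := Finset.sum_le_sum hterm
    have heq : ∑ i : Fin N, ((1 / (N : ℝ)) * F xstar -
        (K i : ℝ) * dist (xs t i) (pr t (xs t i))) =
        F xstar - ∑ i, (K i : ℝ) * dist (xs t i) (pr t (xs t i)) := by
      rw [Finset.sum_sub_distrib, Finset.sum_const, Finset.card_univ, Fintype.card_fin,
        nsmul_eq_mul]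
      field_simp
    rw [heq] at hsum
    exact hsum
  have hεsum : ∀ t, ε ≤ ∑ i, (K i : ℝ) * dist (xs t i) (pr t (xs t i)) := by
    intro t
    have h1 := key t
    have h2 := hLS t
    simp only [hε]
    linarith
  set C : ℝ := 1 + ∑ i, (K i : ℝ) with hC
  have hCpos : 0 < C := by
    have : (0:ℝ) ≤ ∑ i, (K i : ℝ) := Finset.sum_nonneg fun i _ => (K i).coe_nonneg
    simp only [hC]; linarith
  have hKC : ∀ i, (K i : ℝ) ≤ C := by
    intro i
    have h1 : (K i : ℝ) ≤ ∑ j, (K j : ℝ) :=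
      Finset.single_le_sum (fun j _ => (K j).coe_nonneg) (Finset.mem_univ i)
    simp only [hC]; linarith
  set δ : ℝ := ε / (N * C) with hδ
  have hNpos : (0:ℝ) < N := by exact_mod_cast hN
  have hδpos : 0 < δ := by
    apply div_pos hεpos
    positivity
  -- pick for each t an index with large distance
  have hpick : ∀ t, ∃ i : Fin N, δ ≤ dist (xs t i) (pr t (xs t i)) := by
    intro t
    have hcard : ε = ∑ _i : Fin N, ε / N := by
      rw [Finset.sum_const, Finset.card_univ, Fintype.card_fin, nsmul_eq_mul]
      field_simp
    have hne' : (Finset.univ : Finset (Fin N)).Nonempty := ⟨⟨0, hN⟩, Finset.mem_univ _⟩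
    have hsum2 : ∑ _i : Fin N, ε / (N:ℝ) ≤ ∑ i, (K i : ℝ) * dist (xs t i) (pr t (xs t i)) := by
      rw [← hcard]; exact hεsum t
    obtain ⟨i, _, hi⟩ := Finset.exists_le_of_sum_le hne' hsum2
    refine ⟨i, ?_⟩
    have hd0 : 0 ≤ dist (xs t i) (pr t (xs t i)) := dist_nonneg
    have h2 : (K i : ℝ) * dist (xs t i) (pr t (xs t i)) ≤
        C * dist (xs t i) (pr t (xs t i)) := mul_le_mul_of_nonneg_right (hKC i) hd0
    have h3 : ε / N ≤ C * dist (xs t i) (pr t (xs t i)) := le_trans hi h2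
    rw [hδ, div_le_iff₀ (by positivity)]
    calc ε = (ε / N) * N := by field_simp
      _ ≤ (C * dist (xs t i) (pr t (xs t i))) * N := by
          apply mul_le_mul_of_nonneg_right h3 (le_of_lt hNpos)
      _ = dist (xs t i) (pr t (xs t i)) * (N * C) := by ring
  choose it hit using hpick
  set y : ℕ → α := fun t => xs t (it t) with hy
  have hyX : ∀ t, y t ∈ X := fun t => hxs t (it t)
  have hmono' : ∀ s t : ℕ, s ≤ t → Xt s ⊆ Xt t := by
    intro s t h
    induction t, h using Nat.le_induction with
    | base => exact subset_rfl
    | succ n hn ih => exact ih.trans (hmono n)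
  have hsep : ∀ s t : ℕ, s < t → δ ≤ dist (y t) (y s) := by
    intro s t hst
    have hys : y s ∈ Xt t := hmono' (s+1) t hst (hadd s (it s))
    have h1 := (hpr t (y t) (hyX t)).2 (y s) hys
    exact le_trans (hit t) h1
  obtain ⟨a, _, φ, hφ, hlim⟩ := hXc.tendsto_subseq hyX
  obtain ⟨n₀, hn₀⟩ := Metric.tendsto_atTop.mp hlim (δ/2) (by positivity)
  have h1 := hn₀ n₀ le_rfl
  have h2 := hn₀ (n₀+1) (Nat.le_succ _)
  have hφlt : φ n₀ < φ (n₀+1) := hφ (Nat.lt_succ_self _)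
  have h3 := hsep (φ n₀) (φ (n₀+1)) hφlt
  have h4 : dist (y (φ (n₀+1))) (y (φ n₀)) ≤
      dist (y (φ (n₀+1))) a + dist a (y (φ n₀)) := dist_triangle _ _ _
  simp only [Function.comp] at h1 h2
  rw [dist_comm] at h1
  linarith
end

section
/- Convergence of the GDD algorithm with valid, tight, uniformly Lipschitz cuts: Let X be a nonempty compact subset of a metric space, N ≥ 1, and let f_i : X → ℝ be Lipschitz continuous on X for i = 1,…,N; set v* := min_{x∈X} ∑_{i=1}^N f_i(x) and g*_i(x) := (1/N)∑_{j=1}^N f_j(x) − f_i(x). Let L ≥ 0 and for each i let ℒ_i : X × X → ℝ be a cut family satisfying: (validity) ℒ_i(x̂, x) ≤ g*_i(x) for all x̂, x ∈ X; (tightness) ℒ_i(x̂, x̂) = g*_i(x̂) for all x̂ ∈ X; (uniform Lipschitz continuity) |ℒ_i(x̂, x) − ℒ_i(x̂, y)| ≤ L·dist(x, y) for all x̂, x, y ∈ X. For each t ≥ 1 let X^t ⊆ X be a nonempty finite set with X^t ⊆ X^{t+1}, define g^t_i(x) := max_{x̂ ∈ X^t} ℒ_i(x̂, x), and let x^i_t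 ∈ X minimize f_i + g^t_i over X; assume x^i_t ∈ X^{t+1} for all i and t. Then sup_{t≥1} ∑_{i=1}^N (f_i(x^i_t) + g^t_i(x^i_t)) = v*. -/
/-- Convergence of the GDD algorithm with valid, tight, uniformly Lipschitz cuts. -/
theorem gdd_cuts_convergence {α : Type*} [MetricSpace α]
    (X : Set α) (hXne : X.Nonempty) (hXc : IsCompact X)
    (N : ℕ) (hN : 1 ≤ N) (f : Fin N → α → ℝ)
    (hf : ∀ i, ∃ K : NNReal, LipschitzOnWith K (f i) X)
    (gstar : Fin N → α → ℝ)
    (hgstar : ∀ i x, gstar i x = (1 / (N : ℝ)) * ∑ j, f j x - f i x)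
    (L : ℝ) (hL : 0 ≤ L)
    (cut : Fin N → α → α → ℝ)
    (hvalid : ∀ i, ∀ xhat ∈ X, ∀ x ∈ X, cut i xhat x ≤ gstar i x)
    (htight : ∀ i, ∀ xhat ∈ X, cut i xhat xhat = gstar i xhat)
    (hlip : ∀ i, ∀ xhat ∈ X, ∀ x ∈ X, ∀ y ∈ X,
      |cut i xhat x - cut i xhat y| ≤ L * dist x y)
    (Xt : ℕ → Set α) (hfin : ∀ t, (Xt t).Finite) (hne : ∀ t, (Xt t).Nonempty)
    (hsubX : ∀ t, Xt t ⊆ X) (hmono : ∀ t, Xt t ⊆ Xt (t + 1))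
    (g : ℕ → Fin N → α → ℝ)
    (hg : ∀ t i x, g t i x = sSup ((fun xhat => cut i xhat x) '' Xt t))
    (xs : ℕ → Fin N → α) (hxs : ∀ t i, xs t i ∈ X)
    (hminz : ∀ t i, ∀ y ∈ X, f i (xs t i) + g t i (xs t i) ≤ f i y + g t i y)
    (hadd : ∀ t i, xs t i ∈ Xt (t + 1)) :
    (⨆ t : ℕ, ∑ i, (f i (xs t i) + g t i (xs t i))) =
      sInf ((fun x => ∑ i, f i x) '' X) := by
  classical
  set F : α → ℝ := fun x => ∑ i, f i x with hF
  have hNpos : (0:ℝ) < N := by exact_mod_cast hN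
  have hNne : (N:ℝ) ≠ 0 := ne_of_gt hNpos
  have hfc : ∀ i, ContinuousOn (f i) X := fun i => (hf i).choose_spec.continuousOn
  have hFc : ContinuousOn F X := continuousOn_finset_sum _ (fun i _ => hfc i)
  obtain ⟨x0, hx0X, hx0min'⟩ := hXc.exists_isMinOn hXne hFc
  have hx0min : ∀ y ∈ X, F x0 ≤ F y := fun y hy => hx0min' hy
  have hv : sInf (F '' X) = F x0 := by
    apply le_antisymm
    · exact csInf_le ⟨F x0, by rintro _ ⟨y, hy, rfl⟩; exact hx0min y hy⟩ ⟨x0, hx0X, rfl⟩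
    · exact le_csInf (hXne.image F) (by rintro _ ⟨y, hy, rfl⟩; exact hx0min y hy)
  have hgstarsum : ∀ x, ∑ i, gstar i x = 0 := by
    intro x
    have : ∑ i, gstar i x = ∑ i : Fin N, ((1 / (N : ℝ)) * ∑ j, f j x - f i x) :=
      Finset.sum_congr rfl (fun i _ => hgstar i x)
    rw [this, Finset.sum_sub_distrib, Finset.sum_const, Finset.card_univ, Fintype.card_fin]
    rw [nsmul_eq_mul, ← mul_assoc, mul_one_div_cancel hNne, one_mul, sub_self]
  have hfg : ∀ i x, f i x + gstar i x = (1 / (N:ℝ)) * F x := by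
    intro i x; rw [hgstar]; simp only [hF]; ring
  have hgle : ∀ t i x c, (∀ xhat ∈ Xt t, cut i xhat x ≤ c) → g t i x ≤ c := by
    intro t i x c h
    rw [hg]
    exact csSup_le ((hne t).image _) (by rintro _ ⟨xh, hxh, rfl⟩; exact h xh hxh)
  have hcutle : ∀ t i x xhat, xhat ∈ Xt t → cut i xhat x ≤ g t i x := by
    intro t i x xhat hxh
    rw [hg]
    exact le_csSup ((hfin t).image _).bddAbove ⟨xhat, hxh, rfl⟩
  have hgvalid : ∀ t i x, x ∈ X → g t i x ≤ gstar i x :=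
    fun t i x hx => hgle t i x _ (fun xh hxh => hvalid i xh (hsubX t hxh) x hx)
  have hmono' : ∀ s t, s ≤ t → Xt s ⊆ Xt t := by
    intro s t hst
    induction hst with
    | refl => exact subset_rfl
    | step _ ih => exact ih.trans (hmono _)
  set LB : ℕ → ℝ := fun t => ∑ i, (f i (xs t i) + g t i (xs t i)) with hLB
  set δ : ℕ → ℝ := fun t => ∑ i, (gstar i (xs t i) - g t i (xs t i)) with hδ
  have hLBub : ∀ t, LB t ≤ F x0 := by
    intro t
    calc LB t ≤ ∑ i, (f i x0 + g t i x0) :=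
          Finset.sum_le_sum (fun i _ => hminz t i x0 hx0X)
      _ ≤ ∑ i, (f i x0 + gstar i x0) :=
          Finset.sum_le_sum (fun i _ => by linarith [hgvalid t i x0 hx0X])
      _ = F x0 := by rw [Finset.sum_add_distrib, hgstarsum]; simp [hF]
  have hbddLB : BddAbove (Set.range LB) := ⟨F x0, by rintro _ ⟨t, rfl⟩; exact hLBub t⟩
  have hLBlb : ∀ t, F x0 - δ t ≤ LB t := by
    intro t
    have h1 : LB t = (∑ i : Fin N, (1/(N:ℝ)) * F (xs t i)) - δ t := by
      rw [hLB, hδ, ← Finset.sum_sub_distrib]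
      exact Finset.sum_congr rfl (fun i _ => by
        have := hfg i (xs t i); linarith)
    have h2 : (∑ i : Fin N, (1/(N:ℝ)) * F x0) ≤ ∑ i : Fin N, (1/(N:ℝ)) * F (xs t i) :=
      Finset.sum_le_sum (fun i _ => by
        have := hx0min (xs t i) (hxs t i)
        have h1N : (0:ℝ) ≤ 1/(N:ℝ) := by positivity
        exact mul_le_mul_of_nonneg_left this h1N)
    have h3 : (∑ i : Fin N, (1/(N:ℝ)) * F x0) = F x0 := by
      rw [Finset.sum_const, Finset.card_univ, Fintype.card_fin]
      rw [nsmul_eq_mul, ← mul_assoc, mul_one_div_cancel hNne, one_mul]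
    rw [h1]; linarith
  have hgsc : ∀ i, ContinuousOn (gstar i) X := by
    intro i
    have he : gstar i = fun x => (1 / (N : ℝ)) * ∑ j, f j x - f i x := funext (hgstar i)
    rw [he]
    exact (continuousOn_const.mul hFc).sub (hfc i)
  have hlow : ∀ ε > 0, F x0 ≤ (⨆ t, LB t) + ε := by
    intro ε hε
    obtain ⟨xbar, hxbar, φ, hφ, hconv⟩ :=
      (isCompact_univ_pi (fun _ : Fin N => hXc)).tendsto_subseq
        (x := fun t => xs t) (fun t => by
          simp only [Set.mem_univ_pi]; exact fun i => hxs t i)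
    have hxbarX : ∀ i, xbar i ∈ X := by
      simp only [Set.mem_univ_pi] at hxbar; exact hxbar
    have hconvi : ∀ i, Filter.Tendsto (fun k => xs (φ k) i) Filter.atTop (nhds (xbar i)) := by
      intro i
      exact (tendsto_pi_nhds.mp hconv) i
    have hgst : ∀ i, Filter.Tendsto (fun k => gstar i (xs (φ k) i)) Filter.atTop
        (nhds (gstar i (xbar i))) := by
      intro i
      have hcw := (hgsc i).continuousWithinAt (hxbarX i)
      exact hcw.tendsto.comp
        (tendsto_nhdsWithin_of_tendsto_nhds_of_eventually_within _ (hconvi i)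
          (Filter.Eventually.of_forall (fun k => hxs (φ k) i)))
    set h : ℕ → ℝ := fun k => ∑ i, gstar i (xs (φ k) i) with hh'
    set H : ℝ := ∑ i, gstar i (xbar i) with hH
    have hhT : Filter.Tendsto h Filter.atTop (nhds H) :=
      tendsto_finset_sum _ (fun i _ => hgst i)
    set D : ℕ → ℝ := fun k => ∑ i, dist (xs (φ k) i) (xbar i) with hD'
    have hDT : Filter.Tendsto D Filter.atTop (nhds 0) := by
      have : Filter.Tendsto D Filter.atTop (nhds (∑ i : Fin N, (0:ℝ))) :=
        tendsto_finset_sum _ (fun i _ => tendsto_iff_dist_tendsto_zero.mp (hconvi i))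
      simpa using this
    have hDnn : ∀ k, 0 ≤ D k :=
      fun k => Finset.sum_nonneg (fun i _ => dist_nonneg)
    obtain ⟨K₁, hK₁⟩ := Metric.tendsto_atTop.mp hhT (ε/6) (by positivity)
    obtain ⟨K₂, hK₂⟩ := Metric.tendsto_atTop.mp hDT (ε/(6*(L+1))) (by positivity)
    set K := max K₁ K₂ with hK
    have hLD : ∀ k ≥ K, L * D k < ε/6 := by
      intro k hk
      have := hK₂ k (le_trans (le_max_right _ _) hk)
      rw [Real.dist_eq, sub_zero, abs_of_nonneg (hDnn k)] at this
      have h1 : L * D k ≤ (L+1) * D k := by nlinarith [hDnn k]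
      have h2 : (L+1) * D k < (L+1) * (ε/(6*(L+1))) := by
        apply mul_lt_mul_of_pos_left this (by linarith)
      have h3 : (L+1) * (ε/(6*(L+1))) = ε/6 := by field_simp
      linarith
    have hHd : ∀ k ≥ K, |h k - H| < ε/6 := by
      intro k hk
      have := hK₁ k (le_trans (le_max_left _ _) hk)
      rwa [Real.dist_eq] at this
    set a := φ K with ha
    set b := φ (K+1) with hb
    have hab : a < b := hφ (Nat.lt_succ_self K)
    have hδb : δ b < ε := by
      have key : ∀ i : Fin N, gstar i (xs b i) - g b i (xs b i) ≤
          gstar i (xs b i) - gstar i (xs a i) + L * dist (xs a i) (xs b i) := by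
        intro i
        have hmem : xs a i ∈ Xt b := hmono' (a+1) b hab (hadd a i)
        have h1 : cut i (xs a i) (xs b i) ≤ g b i (xs b i) := hcutle b i (xs b i) _ hmem
        have h2 := abs_le.mp (hlip i (xs a i) (hxs a i) (xs a i) (hxs a i) (xs b i) (hxs b i))
        have h3 := htight i (xs a i) (hxs a i)
        linarith [h2.2]
      have hsum : δ b ≤ (h (K+1) - h K) + L * (D K + D (K+1)) := by
        rw [hδ]
        calc (∑ i, (gstar i (xs b i) - g b i (xs b i)))
            ≤ ∑ i, (gstar i (xs b i) - gstar i (xs a i) + L * dist (xs a i) (xs b i)) :=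
              Finset.sum_le_sum (fun i _ => key i)
          _ ≤ ∑ i, (gstar i (xs b i) - gstar i (xs a i)
                + L * (dist (xs a i) (xbar i) + dist (xs b i) (xbar i))) := by
              apply Finset.sum_le_sum
              intro i _
              have htri : dist (xs a i) (xs b i)
                  ≤ dist (xs a i) (xbar i) + dist (xs b i) (xbar i) := by
                calc dist (xs a i) (xs b i) ≤ dist (xs a i) (xbar i) + dist (xbar i) (xs b i) :=
                      dist_triangle _ _ _
                  _ = dist (xs a i) (xbar i) + dist (xs b i) (xbar i) := by rw [dist_comm (xbar i)]
              nlinarith [mul_le_mul_of_nonneg_left htri hL]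
          _ = (h (K+1) - h K) + L * (D K + D (K+1)) := by
              simp only [hh', hD', ha, hb]
              rw [Finset.sum_add_distrib, Finset.sum_sub_distrib, ← Finset.mul_sum,
                Finset.sum_add_distrib]
      have e1 := hHd K (le_refl K)
      have e2 := hHd (K+1) (Nat.le_succ K)
      have e3 := hLD K (le_refl K)
      have e4 := hLD (K+1) (Nat.le_succ K)
      have := abs_le.mp e1.le
      have := abs_le.mp e2.le
      nlinarith [abs_le.mp e1.le, abs_le.mp e2.le, hDnn K, hDnn (K+1)]
    have hle : F x0 - ε ≤ LB b := by
      have := hLBlb b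
      linarith
    have : LB b ≤ ⨆ t, LB t := le_ciSup hbddLB b
    linarith
  rw [hv]
  exact le_antisymm (ciSup_le hLBub) (le_of_forall_pos_le_add hlow)
end

section
/- Strong duality for GDD with constraints: Let N ≥ 1, let X_1,…,X_N be nonempty subsets of a set α whose intersection ⋂_{i=1}^N X_i is nonempty, and let f : α → ℝ satisfy 0 ≤ f(x) for all x ∈ ⋃_{i=1}^N X_i and f bounded above on ⋃_{i=1}^N X_i. Consider the set D of all values (1/N) ∑_{i=1}^N inf_{x ∈ X_i} (f(x) + g_i(x)), taken over all families g_i : α → ℝ, i = 1,…,N, such that ∑_{i=1}^N g_i(x) = 0 for all x ∈ ⋃_{i=1}^N X_i and each set {f(x) + g_i(x) : x ∈ X_i} is bounded below. Then u* := inf { f(x) : x ∈ ⋂_{i=1}^N X_i } is the greatest element of D, i.e., u* ∈ D and d ≤ u* for all d ∈ D. -/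
/-- Strong duality for GDD with constraints: the constrained primal value is the
greatest element of the set of constrained-GDD dual bounds. -/
theorem cgdd_strong_duality {α : Type*} (N : ℕ) (hN : 1 ≤ N)
    (Xs : Fin N → Set α) (hXsNe : ∀ i, (Xs i).Nonempty)
    (hint : (⋂ i, Xs i).Nonempty)
    (f : α → ℝ)
    (hf0 : ∀ x ∈ ⋃ i, Xs i, 0 ≤ f x)
    (hfb : BddAbove (f '' ⋃ i, Xs i)) :
    IsGreatest
      {d : ℝ | ∃ g : Fin N → α → ℝ,
        (∀ x ∈ ⋃ i, Xs i, ∑ i, g i x = 0) ∧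
        (∀ i, BddBelow ((fun x => f x + g i x) '' Xs i)) ∧
        d = (1 / (N : ℝ)) * ∑ i, sInf ((fun x => f x + g i x) '' Xs i)}
      (sInf (f '' ⋂ i, Xs i)) := by
  classical
  have hNpos : (0 : ℝ) < N := by exact_mod_cast hN
  set u : ℝ := sInf (f '' ⋂ i, Xs i) with hu
  have hIsub : (⋂ i, Xs i) ⊆ ⋃ i, Xs i := by
    obtain ⟨i0⟩ : Nonempty (Fin N) := ⟨⟨0, hN⟩⟩
    exact (Set.iInter_subset Xs i0).trans (Set.subset_iUnion Xs i0)
  have hImNe : (f '' ⋂ i, Xs i).Nonempty := hint.image f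
  have hImBdd : BddBelow (f '' ⋂ i, Xs i) := by
    refine ⟨0, ?_⟩
    rintro y ⟨x, hx, rfl⟩
    exact hf0 x (hIsub hx)
  have huleB : ∀ x ∈ ⋂ i, Xs i, u ≤ f x := fun x hx =>
    csInf_le hImBdd ⟨x, hx, rfl⟩
  set B : ℝ := u + 1 with hB
  -- choice of a missing index for points outside the intersection
  have hj : ∀ x : α, x ∉ (⋂ i, Xs i) → ∃ k : Fin N, x ∉ Xs k := by
    intro x hx
    by_contra h
    push_neg at h
    exact hx (Set.mem_iInter.mpr h)
  set jx : α → Fin N := fun x =>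
    if h : ∃ k : Fin N, x ∉ Xs k then h.choose else ⟨0, hN⟩ with hjx
  have hjxspec : ∀ x : α, x ∉ (⋂ i, Xs i) → x ∉ Xs (jx x) := by
    intro x hx
    have h := hj x hx
    simp only [hjx, dif_pos h]
    exact h.choose_spec
  set g : Fin N → α → ℝ := fun i x =>
    if x ∈ ⋂ j, Xs j then 0
    else if x ∈ ⋃ j, Xs j then
      (if i = jx x then ((N : ℝ) - 1) * (f x - B) else B - f x)
    else 0 with hg
  have hgI : ∀ (i : Fin N) (x : α), x ∈ ⋂ j, Xs j → g i x = 0 := by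
    intro i x h
    simp only [hg]
    rw [if_pos h]
  have hgval : ∀ (i : Fin N) (x : α), x ∉ (⋂ j, Xs j) → x ∈ ⋃ j, Xs j →
      g i x = if i = jx x then ((N : ℝ) - 1) * (f x - B) else B - f x := by
    intro i x h1 h2
    simp only [hg]
    rw [if_neg h1, if_pos h2]
  -- pointwise value on Xs i
  have hval : ∀ i, ∀ x ∈ Xs i,
      f x + g i x = if x ∈ ⋂ j, Xs j then f x else B := by
    intro i x hx
    by_cases hxI : x ∈ ⋂ j, Xs j
    · rw [hgI i x hxI, if_pos hxI, add_zero]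
    · have hxU : x ∈ ⋃ j, Xs j := Set.mem_iUnion.mpr ⟨i, hx⟩
      have hne : i ≠ jx x := by
        intro h
        exact hjxspec x hxI (h ▸ hx)
      rw [hgval i x hxI hxU, if_neg hne, if_neg hxI]
      ring
  -- each infimum equals u
  have hinf : ∀ i, sInf ((fun x => f x + g i x) '' Xs i) = u := by
    intro i
    have hlb : ∀ y ∈ (fun x => f x + g i x) '' Xs i, u ≤ y := by
      rintro y ⟨x, hx, rfl⟩
      show u ≤ f x + g i x
      rw [hval i x hx]
      by_cases hxI : x ∈ ⋂ j, Xs j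
      · rw [if_pos hxI]; exact huleB x hxI
      · rw [if_neg hxI, hB]; linarith
    have hbdd : BddBelow ((fun x => f x + g i x) '' Xs i) := ⟨u, hlb⟩
    refine le_antisymm ?_ (le_csInf ((hXsNe i).image _) hlb)
    refine le_csInf hImNe ?_
    rintro y ⟨x, hx, rfl⟩
    have hxi : x ∈ Xs i := Set.mem_iInter.mp hx i
    have hfe : f x + g i x = f x := by rw [hval i x hxi, if_pos hx]
    calc sInf ((fun x => f x + g i x) '' Xs i) ≤ f x + g i x :=
          csInf_le hbdd ⟨x, hxi, rfl⟩
      _ = f x := hfe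
  constructor
  · -- membership: our g witnesses u ∈ D
    refine ⟨g, ?_, ?_, ?_⟩
    · intro x hxU
      by_cases hxI : x ∈ ⋂ j, Xs j
      · rw [Finset.sum_congr rfl fun i _ => hgI i x hxI, Finset.sum_const,
          smul_zero]
      · have key : ∀ i : Fin N, g i x =
            (B - f x) + (if i = jx x then (N : ℝ) * (f x - B) else 0) := by
          intro i
          rw [hgval i x hxI hxU]
          split <;> ring
        rw [Finset.sum_congr rfl fun i _ => key i, Finset.sum_add_distrib,
          Finset.sum_ite_eq' Finset.univ (jx x) (fun _ => (N : ℝ) * (f x - B)),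
          if_pos (Finset.mem_univ _), Finset.sum_const, Finset.card_univ,
          Fintype.card_fin, nsmul_eq_mul]
        ring
    · intro i
      refine ⟨u, ?_⟩
      rintro y ⟨x, hx, rfl⟩
      show u ≤ f x + g i x
      rw [hval i x hx]
      by_cases hxI : x ∈ ⋂ j, Xs j
      · rw [if_pos hxI]; exact huleB x hxI
      · rw [if_neg hxI, hB]; linarith
    · rw [Finset.sum_congr rfl fun i _ => hinf i, Finset.sum_const,
        Finset.card_univ, Fintype.card_fin, nsmul_eq_mul]
      field_simp
  · -- upper bound: weak duality
    rintro d ⟨g', hsum, hbdd, rfl⟩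
    refine le_csInf hImNe ?_
    rintro y ⟨x, hx, rfl⟩
    have hxU : x ∈ ⋃ i, Xs i := hIsub hx
    have hle : ∀ i, sInf ((fun x => f x + g' i x) '' Xs i) ≤ f x + g' i x :=
      fun i => csInf_le (hbdd i) ⟨x, Set.mem_iInter.mp hx i, rfl⟩
    have hsle : ∑ i, sInf ((fun x => f x + g' i x) '' Xs i)
        ≤ ∑ i : Fin N, (f x + g' i x) := Finset.sum_le_sum fun i _ => hle i
    have hval2 : ∑ i : Fin N, (f x + g' i x) = N * f x := by
      rw [Finset.sum_add_distrib, hsum x hxU, add_zero, Finset.sum_const,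
        Finset.card_univ, Fintype.card_fin, nsmul_eq_mul]
    calc (1 / (N : ℝ)) * ∑ i, sInf ((fun x => f x + g' i x) '' Xs i)
        ≤ (1 / (N : ℝ)) * ((N : ℝ) * f x) := by
          apply mul_le_mul_of_nonneg_left (hsle.trans_eq hval2)
          positivity
      _ = f x := by field_simp
end

section
/- Weak duality for GDD with constraints: Let N ≥ 1, let X_1,…,X_N be nonempty subsets of a set α with ⋂_{i=1}^N X_i nonempty, and let f : α → ℝ. If g_i : α → ℝ, i = 1,…,N, satisfy ∑_{i=1}^N g_i(x) = 0 for all x ∈ ⋃_{i=1}^N X_i and each set {f(x) + g_i(x) : x ∈ X_i} is bounded below, then (1/N) ∑_{i=1}^N inf_{x ∈ X_i} (f(x) + g_i(x)) ≤ inf { f(x) : x ∈ ⋂_{i=1}^N X_i }. -/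
/-- Weak duality for GDD with constraints. -/
theorem cgdd_weak_duality {α : Type*} (N : ℕ) (hN : 1 ≤ N)
    (Xs : Fin N → Set α) (hXsNe : ∀ i, (Xs i).Nonempty)
    (hint : (⋂ i, Xs i).Nonempty)
    (f : α → ℝ) (g : Fin N → α → ℝ)
    (hg : ∀ x ∈ ⋃ i, Xs i, ∑ i, g i x = 0)
    (hbdd : ∀ i, BddBelow ((fun x => f x + g i x) '' Xs i)) :
    (1 / (N : ℝ)) * ∑ i, sInf ((fun x => f x + g i x) '' Xs i) ≤
      sInf (f '' ⋂ i, Xs i) := by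
  have hNpos : (0:ℝ) < N := by exact_mod_cast hN
  apply le_csInf (hint.image f)
  rintro y ⟨x, hx, rfl⟩
  have hxi : ∀ i, x ∈ Xs i := by simpa [Set.mem_iInter] using hx
  have hxU : x ∈ ⋃ i, Xs i := Set.mem_iUnion.2 ⟨⟨0, hN⟩, hxi _⟩
  have hsum : ∑ i, sInf ((fun x => f x + g i x) '' Xs i) ≤ (N:ℝ) * f x := by
    calc ∑ i, sInf ((fun x => f x + g i x) '' Xs i)
        ≤ ∑ i, (f x + g i x) := by
          refine Finset.sum_le_sum fun i _ => csInf_le (hbdd i) ⟨x, hxi i, rfl⟩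
      _ = (N:ℝ) * f x := by
          rw [Finset.sum_add_distrib, hg x hxU, add_zero, Finset.sum_const,
            Finset.card_univ, Fintype.card_fin, nsmul_eq_mul]
  rw [div_mul_eq_mul_div, one_mul, div_le_iff₀ hNpos]
  linarith [hsum]
end

section
/- Convex envelope of a piecewise constant function on polyhedral pieces: Let n ≥ 1, K ≥ 1, and for each k = 1,…,K let A_k be a real m_k × n matrix, b_k ∈ ℝ^{m_k}, and g_k ∈ ℝ. Suppose each polyhedron Q_k := { y ∈ ℝ^n : A_k y ≤ b_k } (componentwise inequality) is nonempty and bounded. Define the set G := ⋃_{k=1}^K { (y, θ) ∈ ℝ^n × ℝ : A_k y ≤ b_k and θ ≥ g_k }, and define E := { (α, β) ∈ ℝ × ℝ^n : for each k = 1,…,K there exists η_k ∈ ℝ^{m_k} with η_k ≥ 0, α + b_kᵀ η_k ≤ g_k, and A_kᵀ η_k = β }. Then for every x in the convex hull of ⋃_{k=1}^K Q_k, inf { θ : (x, θ) ∈ conv(G) } = sup { α + βᵀx : (α, β) ∈ E }. -/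
open Set Finset

section Cone
variable {E : Type*} [NormedAddCommGroup E] [NormedSpace ℝ E] [FiniteDimensional ℝ E]

lemma cone_carath {m : ℕ} (v : Fin m → E) (η : Fin m → ℝ) (hη : ∀ j, 0 ≤ η j) :
    ∃ S : Finset (Fin m), LinearIndependent ℝ (fun j : S => v j) ∧
      ∃ μ : Fin m → ℝ, (∀ j, 0 ≤ μ j) ∧ (∀ j ∉ S, μ j = 0) ∧
        ∑ j, μ j • v j = ∑ j, η j • v j := by
  classical
  suffices h : ∀ N : ℕ, ∀ η : Fin m → ℝ, (univ.filter fun j => η j ≠ 0).card ≤ N →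
      (∀ j, 0 ≤ η j) →
      ∃ S : Finset (Fin m), LinearIndependent ℝ (fun j : S => v j) ∧
        ∃ μ : Fin m → ℝ, (∀ j, 0 ≤ μ j) ∧ (∀ j ∉ S, μ j = 0) ∧
          ∑ j, μ j • v j = ∑ j, η j • v j from
    h _ η le_rfl hη
  intro N
  induction N with
  | zero =>
    intro η hcard hη0
    have hzero : ∀ j, η j = 0 := by
      intro j
      by_contra hj
      have : j ∈ univ.filter fun j => η j ≠ 0 := by simp [hj]
      have := Finset.card_pos.mpr ⟨j, this⟩
      omega
    refine ⟨∅, ?_, 0, fun j => le_rfl, fun j _ => rfl, ?_⟩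
    · haveI : IsEmpty {x // x ∈ (∅ : Finset (Fin m))} :=
        ⟨fun x => (Finset.notMem_empty _ x.2)⟩
      exact linearIndependent_empty_type
    · simp [hzero]
  | succ N ih =>
    intro η hcard hη0
    set S : Finset (Fin m) := univ.filter fun j => η j ≠ 0 with hS
    by_cases hli : LinearIndependent ℝ (fun j : S => v j)
    · exact ⟨S, hli, η, hη0, fun j hj => by
        simpa [hS, Finset.mem_filter] using hj, rfl⟩
    · obtain ⟨g, hgsum, i₀, hgi₀⟩ := Fintype.not_linearIndependent_iff.mp hli
      -- extend g to Fin m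
      set c : Fin m → ℝ := fun j => if h : j ∈ S then g ⟨j, h⟩ else 0 with hc
      have hcS : ∀ j ∉ S, c j = 0 := fun j hj => by simp [hc, hj]
      have hcsum : ∑ j, c j • v j = 0 := by
        rw [← Finset.sum_subset (Finset.subset_univ S) (fun j _ hj => by
          rw [hcS j hj, zero_smul])]
        rw [← Finset.sum_attach S (fun j => c j • v j)]
        calc ∑ j ∈ S.attach, c j • v j = ∑ j ∈ S.attach, g j • v j := by
              apply Finset.sum_congr rfl
              intro j _
              simp [hc, j.2]
          _ = 0 := by rw [← hgsum]; rfl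
      have hkey : ∀ c : Fin m → ℝ, (∀ j ∉ S, c j = 0) → (∑ j, c j • v j = 0) →
          (∃ j, 0 < c j) →
          ∃ S' : Finset (Fin m), LinearIndependent ℝ (fun j : S' => v j) ∧
            ∃ μ : Fin m → ℝ, (∀ j, 0 ≤ μ j) ∧ (∀ j ∉ S', μ j = 0) ∧
              ∑ j, μ j • v j = ∑ j, η j • v j := by
        intro c hcS hcsum ⟨jp, hjp⟩
        set T : Finset (Fin m) := univ.filter fun j => 0 < c j with hT
        have hTne : T.Nonempty := ⟨jp, by simp [hT, hjp]⟩
        obtain ⟨j₀, hj₀T, hj₀min⟩ := Finset.exists_min_image T (fun j => η j / c j) hTne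
        have hcj₀ : 0 < c j₀ := by simpa [hT] using hj₀T
        set t : ℝ := η j₀ / c j₀ with ht
        have htnn : 0 ≤ t := div_nonneg (hη0 j₀) hcj₀.le
        set η' : Fin m → ℝ := fun j => η j - t * c j with hη'
        have hη'nn : ∀ j, 0 ≤ η' j := by
          intro j
          rcases le_or_gt (c j) 0 with h | h
          · have : t * c j ≤ 0 := mul_nonpos_of_nonneg_of_nonpos htnn h
            simp only [hη']; linarith [hη0 j]
          · have hjT : j ∈ T := by simp [hT, h]
            have := hj₀min j hjT
            have : t * c j ≤ η j := by
              rw [ht]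
              calc η j₀ / c j₀ * c j ≤ η j / c j * c j := by
                    apply mul_le_mul_of_nonneg_right this h.le
                _ = η j := div_mul_cancel₀ _ h.ne'
            simp only [hη']; linarith
        have hη'j₀ : η' j₀ = 0 := by
          simp only [hη', ht]
          field_simp
          ring
        have hsupp : (univ.filter fun j => η' j ≠ 0) ⊆ S.erase j₀ := by
          intro j hj
          simp only [Finset.mem_filter, Finset.mem_univ, true_and] at hj
          have hjS : j ∈ S := by
            by_contra hjS
            have h1 : η j = 0 := by
              by_contra h1; exact hjS (by simp [hS, h1])
            have h2 : c j = 0 := hcS j hjS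
            apply hj; simp [hη', h1, h2]
          refine Finset.mem_erase.mpr ⟨?_, hjS⟩
          intro hjj₀
          exact hj (hjj₀ ▸ hη'j₀)
        have hj₀S : j₀ ∈ S := by
          by_contra h
          exact absurd (hcS j₀ h) hcj₀.ne'
        have hcard' : (univ.filter fun j => η' j ≠ 0).card ≤ N := by
          have h1 := Finset.card_le_card hsupp
          have h2 : (S.erase j₀).card < S.card := Finset.card_erase_lt_of_mem hj₀S
          omega
        obtain ⟨S', hli', μ, hμnn, hμS', hμsum⟩ := ih η' hcard' hη'nn
        refine ⟨S', hli', μ, hμnn, hμS', ?_⟩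
        rw [hμsum]
        simp only [hη', sub_smul, mul_smul, Finset.sum_sub_distrib, ← Finset.smul_sum, hcsum,
          smul_zero, sub_zero]
      rcases em (∃ j, 0 < c j) with h | h
      · exact hkey c hcS hcsum h
      · refine hkey (fun j => -c j) (fun j hj => by simp [hcS j hj])
          (by simp only [neg_smul, Finset.sum_neg_distrib, hcsum, neg_zero]) ?_
        push_neg at h
        refine ⟨i₀, ?_⟩
        have hi₀ : c (i₀ : Fin m) = g i₀ := by simp [hc, i₀.2]
        have hne : c (i₀ : Fin m) ≠ 0 := by rw [hi₀]; exact hgi₀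
        exact neg_pos.mpr (lt_of_le_of_ne (h (i₀ : Fin m)) hne)


lemma indep_cone_closed {m : ℕ} (v : Fin m → E) (S : Finset (Fin m))
    (hli : LinearIndependent ℝ (fun j : S => v j)) :
    IsClosed {x : E | ∃ μ : Fin m → ℝ, (∀ j, 0 ≤ μ j) ∧ (∀ j ∉ S, μ j = 0) ∧
      x = ∑ j, μ j • v j} := by
  classical
  set T : ({x // x ∈ S} → ℝ) →ₗ[ℝ] E :=
    { toFun := fun w => ∑ j : {x // x ∈ S}, w j • v j
      map_add' := by
        intro w₁ w₂
        simp [add_smul, Finset.sum_add_distrib]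
      map_smul' := by
        intro r w
        simp [smul_smul, Finset.smul_sum] } with hT
  have hker : LinearMap.ker T = ⊥ := by
    rw [LinearMap.ker_eq_bot']
    intro w hw
    have := Fintype.linearIndependent_iff.mp hli w hw
    funext j
    exact this j
  have hemb := T.isClosedEmbedding_of_injective hker
  have hclosed : IsClosed {w : {x // x ∈ S} → ℝ | ∀ j, 0 ≤ w j} := by
    have : {w : {x // x ∈ S} → ℝ | ∀ j, 0 ≤ w j} = ⋂ j, {w | 0 ≤ w j} := by
      ext w; simp [Set.mem_iInter]
    rw [this]
    exact isClosed_iInter fun j => isClosed_le continuous_const (continuous_apply j)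
  have himg := hemb.isClosedMap _ hclosed
  convert himg using 1
  ext x
  constructor
  · rintro ⟨μ, hμnn, hμS, rfl⟩
    refine ⟨fun j => μ j, fun j => hμnn j, ?_⟩
    show ∑ j : {x // x ∈ S}, μ (j : Fin m) • v (j : Fin m) = _
    rw [show (∑ j : {x // x ∈ S}, μ (j : Fin m) • v (j : Fin m)) = ∑ j ∈ S, μ j • v j from
      Finset.sum_attach S (fun j => μ j • v j)]
    exact Finset.sum_subset (Finset.subset_univ S) (fun j _ hj => by
      rw [hμS j hj, zero_smul])
  · rintro ⟨w, hwnn, rfl⟩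
    refine ⟨fun j => if h : j ∈ S then w ⟨j, h⟩ else 0, ?_, ?_, ?_⟩
    · intro j; dsimp only; split
      · exact hwnn _
      · exact le_rfl
    · intro j hj; simp [hj]
    · show T w = _
      rw [← Finset.sum_subset (Finset.subset_univ S) (fun j _ hj => by simp [hj])]
      rw [← Finset.sum_attach S (fun j => (if h : j ∈ S then w ⟨j, h⟩ else 0) • v j)]
      show ∑ j : {x // x ∈ S}, w j • v j = _
      apply Finset.sum_congr rfl
      intro j _
      simp [j.2]

lemma fg_cone_closed {m : ℕ} (v : Fin m → E) :
    IsClosed {x : E | ∃ η : Fin m → ℝ, (∀ j, 0 ≤ η j) ∧ x = ∑ j, η j • v j} := by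
  classical
  have heq : {x : E | ∃ η : Fin m → ℝ, (∀ j, 0 ≤ η j) ∧ x = ∑ j, η j • v j} =
      ⋃ S : Finset (Fin m), {x : E | LinearIndependent ℝ (fun j : S => v j) ∧
        ∃ μ : Fin m → ℝ, (∀ j, 0 ≤ μ j) ∧ (∀ j ∉ S, μ j = 0) ∧ x = ∑ j, μ j • v j} := by
    ext x
    simp only [Set.mem_setOf_eq, Set.mem_iUnion]
    constructor
    · rintro ⟨η, hηnn, rfl⟩
      obtain ⟨S, hli, μ, hμnn, hμS, hsum⟩ := cone_carath v η hηnn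
      exact ⟨S, hli, μ, hμnn, hμS, hsum.symm⟩
    · rintro ⟨S, _, μ, hμnn, _, rfl⟩
      exact ⟨μ, hμnn, rfl⟩
  rw [heq]
  apply isClosed_iUnion_of_finite
  intro S
  by_cases hli : LinearIndependent ℝ (fun j : S => v j)
  · have : {x : E | LinearIndependent ℝ (fun j : S => v j) ∧
        ∃ μ : Fin m → ℝ, (∀ j, 0 ≤ μ j) ∧ (∀ j ∉ S, μ j = 0) ∧ x = ∑ j, μ j • v j} =
        {x : E | ∃ μ : Fin m → ℝ, (∀ j, 0 ≤ μ j) ∧ (∀ j ∉ S, μ j = 0) ∧ x = ∑ j, μ j • v j} := by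
      ext x; simp [hli]
    rw [this]
    exact indep_cone_closed v S hli
  · have : {x : E | LinearIndependent ℝ (fun j : S => v j) ∧
        ∃ μ : Fin m → ℝ, (∀ j, 0 ≤ μ j) ∧ (∀ j ∉ S, μ j = 0) ∧ x = ∑ j, μ j • v j} = ∅ := by
      ext x; simp [hli]
    rw [this]
    exact isClosed_empty



lemma clm_decomp {n : ℕ} (f : ((Fin n → ℝ) × ℝ) →L[ℝ] ℝ) (z : Fin n → ℝ) (s : ℝ) :
    f (z, s) = (∑ l, z l * f (Pi.single l 1, 0)) + s * f (0, 1) := by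
  have h1 : z = ∑ l, z l • (Pi.single l 1 : Fin n → ℝ) := by
    funext i
    rw [Finset.sum_apply]
    simp [Pi.single_apply, Finset.sum_ite_eq']
  have hz : ((z, s) : (Fin n → ℝ) × ℝ) =
      (∑ l, z l • ((Pi.single l 1 : Fin n → ℝ), (0 : ℝ))) + s • ((0 : Fin n → ℝ), 1) := by
    apply Prod.ext
    · simp only [Prod.fst_add, Prod.fst_sum, Prod.smul_mk, smul_zero, Prod.mk_add_mk]
      simpa using h1
    · simp only [Prod.snd_add, Prod.snd_sum, Prod.smul_mk, smul_zero, smul_eq_mul, mul_one]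
      simp
  rw [hz, map_add, map_sum, map_smul]
  simp only [map_smul, smul_eq_mul]

end Cone

lemma farkas {n mm : ℕ} (A : Matrix (Fin mm) (Fin n) ℝ) (b : Fin mm → ℝ) (c : Fin n → ℝ) (g : ℝ)
    (hne : ∃ y : Fin n → ℝ, ∀ j, A.mulVec y j ≤ b j)
    (h : ∀ y : Fin n → ℝ, (∀ j, A.mulVec y j ≤ b j) → ∑ l, c l * y l ≤ g) :
    ∃ η : Fin mm → ℝ, (∀ j, 0 ≤ η j) ∧ ∑ j, b j * η j ≤ g ∧ ∀ l, ∑ j, A j l * η j = c l := by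
  classical
  set v : Fin (mm + 1) → (Fin n → ℝ) × ℝ :=
    Fin.snoc (fun j => ((fun l => A j l), b j)) (0, 1) with hv
  set D : Set ((Fin n → ℝ) × ℝ) :=
    {x | ∃ η : Fin (mm + 1) → ℝ, (∀ j, 0 ≤ η j) ∧ x = ∑ j, η j • v j} with hD
  have hDclosed : IsClosed D := fg_cone_closed v
  have hDconv : Convex ℝ D := by
    rintro p ⟨ηp, hηp, rfl⟩ q ⟨ηq, hηq, rfl⟩ a bb ha hb hab
    refine ⟨fun j => a * ηp j + bb * ηq j, fun j =>
      add_nonneg (mul_nonneg ha (hηp j)) (mul_nonneg hb (hηq j)), ?_⟩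
    rw [Finset.smul_sum, Finset.smul_sum, ← Finset.sum_add_distrib]
    apply Finset.sum_congr rfl
    intro j _
    rw [add_smul, smul_smul, smul_smul]
  have hDcone : ∀ t : ℝ, 0 ≤ t → ∀ d ∈ D, t • d ∈ D := by
    rintro t ht d ⟨η, hη, rfl⟩
    refine ⟨fun j => t * η j, fun j => mul_nonneg ht (hη j), ?_⟩
    rw [Finset.smul_sum]
    exact Finset.sum_congr rfl fun j _ => by dsimp only; rw [smul_smul]
  have hvD : ∀ i, v i ∈ D := by
    intro i
    refine ⟨Pi.single i 1, fun j => by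
      by_cases h : j = i <;> simp [Pi.single_apply, h], ?_⟩
    rw [Finset.sum_eq_single i (fun j _ hj => by simp [Pi.single_apply, hj]) (by simp)]
    simp
  have hmem : ((c, g) : (Fin n → ℝ) × ℝ) ∈ D := by
    by_contra hcg
    obtain ⟨f, u, hfx, hfs⟩ := geometric_hahn_banach_point_closed hDconv hDclosed hcg
    have h0D : (0 : (Fin n → ℝ) × ℝ) ∈ D := ⟨0, fun j => le_rfl, by simp⟩
    have hu0 : u < 0 := by simpa using hfs 0 h0D
    have hfnn : ∀ d ∈ D, 0 ≤ f d := by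
      intro d hd
      by_contra hfd
      push_neg at hfd
      have ht : 0 < u / f d := div_pos_of_neg_of_neg hu0 hfd
      have := hfs _ (hDcone _ ht.le d hd)
      rw [map_smul, smul_eq_mul, div_mul_cancel₀ _ hfd.ne] at this
      exact lt_irrefl u this
    set w : Fin n → ℝ := fun l => f (Pi.single l 1, 0) with hw
    set t : ℝ := f (0, 1) with htdef
    have hrow : ∀ j : Fin mm, 0 ≤ (∑ l, A j l * w l) + b j * t := by
      intro j
      have := hfnn _ (hvD (Fin.castSucc j))
      rwa [hv, Fin.snoc_castSucc, clm_decomp] at this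
    have htnn : 0 ≤ t := by
      have := hfnn _ (hvD (Fin.last mm))
      rwa [hv, Fin.snoc_last, clm_decomp, Finset.sum_eq_zero (fun l _ => by simp),
        zero_add, one_mul] at this
    have hcgf : (∑ l, c l * w l) + g * t < 0 := by
      have := hfx
      rw [clm_decomp] at this
      linarith
    rcases eq_or_lt_of_le htnn with ht0 | htpos
    · -- t = 0
      obtain ⟨y₀, hy₀⟩ := hne
      have hAw : ∀ j, 0 ≤ ∑ l, A j l * w l := by
        intro j; have := hrow j; rw [← ht0] at this; linarith
      have hcw : ∑ l, c l * w l < 0 := by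
        have := hcgf; rw [← ht0] at this; linarith
      set P : ℝ := ∑ l, c l * w l with hP
      set s : ℝ := (g + 1 - ∑ l, c l * y₀ l) / (-P) with hs
      have hy₀g : ∑ l, c l * y₀ l ≤ g := h y₀ hy₀
      have hsnn : 0 ≤ s := by
        apply div_nonneg _ (by linarith)
        linarith
      have hfeas : ∀ j, A.mulVec (fun l => y₀ l - s * w l) j ≤ b j := by
        intro j
        have : A.mulVec (fun l => y₀ l - s * w l) j
            = A.mulVec y₀ j - s * ∑ l, A j l * w l := by
          simp only [Matrix.mulVec, dotProduct]
          rw [Finset.mul_sum, ← Finset.sum_sub_distrib]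
          apply Finset.sum_congr rfl
          intro l _
          ring
        rw [this]
        have := mul_nonneg hsnn (hAw j)
        linarith [hy₀ j]
      have := h _ hfeas
      have hexp : ∑ l, c l * (y₀ l - s * w l) = (∑ l, c l * y₀ l) - s * P := by
        rw [hP, Finset.mul_sum, ← Finset.sum_sub_distrib]
        apply Finset.sum_congr rfl
        intro l _
        ring
      rw [hexp] at this
      have hPne : P ≠ 0 := ne_of_lt hcw
      have hsP : s * P = (∑ l, c l * y₀ l) - g - 1 := by
        calc s * P = -(s * -P) := by ring
          _ = -(g + 1 - ∑ l, c l * y₀ l) := by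
              rw [hs, div_mul_cancel₀ _ (neg_ne_zero.mpr hPne)]
          _ = (∑ l, c l * y₀ l) - g - 1 := by ring
      linarith
    · -- t > 0
      set y' : Fin n → ℝ := fun l => -(w l) / t with hy'
      have hfeas : ∀ j, A.mulVec y' j ≤ b j := by
        intro j
        have hexp : A.mulVec y' j = (-(∑ l, A j l * w l)) / t := by
          simp only [Matrix.mulVec, dotProduct, hy']
          simp_rw [show ∀ x, A j x * (-w x / t) = -(A j x * w x) / t from fun x => by ring]
          rw [← Finset.sum_div, Finset.sum_neg_distrib]
        rw [hexp, div_le_iff₀ htpos]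
        have := hrow j
        linarith
      have hfin := h y' hfeas
      have hexp2 : ∑ l, c l * y' l = (-(∑ l, c l * w l)) / t := by
        simp only [hy']
        simp_rw [show ∀ x, c x * (-w x / t) = -(c x * w x) / t from fun x => by ring]
        rw [← Finset.sum_div, Finset.sum_neg_distrib]
      rw [hexp2, div_le_iff₀ htpos] at hfin
      linarith
  obtain ⟨η, hηnn, hsum⟩ := hmem
  rw [Fin.sum_univ_castSucc] at hsum
  simp only [hv, Fin.snoc_castSucc, Fin.snoc_last] at hsum
  have h1 := congrArg Prod.fst hsum
  have h2 := congrArg Prod.snd hsum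
  simp only [Prod.fst_add, Prod.fst_sum, Prod.smul_mk, smul_zero, add_zero] at h1
  simp only [Prod.snd_add, Prod.snd_sum, Prod.smul_mk, smul_eq_mul, mul_one] at h2
  refine ⟨fun j => η j.castSucc, fun j => hηnn _, ?_, ?_⟩
  · have : ∑ j, b j * η j.castSucc = ∑ j, η j.castSucc * b j :=
      Finset.sum_congr rfl fun j _ => mul_comm _ _
    rw [this]
    have := hηnn (Fin.last mm)
    linarith [h2.ge, h2.le]
  · intro l
    have := congrFun h1 l
    rw [Finset.sum_apply] at this
    simp only [Pi.smul_apply, smul_eq_mul] at this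
    rw [this]
    exact Finset.sum_congr rfl fun j _ => mul_comm _ _

lemma isCompact_convexJoin {E : Type*} [NormedAddCommGroup E] [NormedSpace ℝ E]
    {s t : Set E} (hs : IsCompact s) (ht : IsCompact t) :
    IsCompact (convexJoin ℝ s t) := by
  have heq : convexJoin ℝ s t =
      (fun q : ℝ × E × E => (1 - q.1) • q.2.1 + q.1 • q.2.2) ''
        (Set.Icc (0:ℝ) 1 ×ˢ s ×ˢ t) := by
    ext z
    rw [mem_convexJoin]
    constructor
    · rintro ⟨a, ha, bb, hb, hz⟩
      rw [segment_eq_image] at hz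
      obtain ⟨θ, hθ, hθz⟩ := hz
      exact ⟨(θ, a, bb), ⟨hθ, ha, hb⟩, hθz⟩
    · rintro ⟨⟨θ, a, bb⟩, ⟨hθ, ha, hb⟩, hz⟩
      refine ⟨a, ha, bb, hb, ?_⟩
      rw [segment_eq_image]
      exact ⟨θ, hθ, hz⟩
  rw [heq]
  exact (isCompact_Icc.prod (hs.prod ht)).image <| by
    exact ((continuous_const.sub continuous_fst).smul (continuous_snd.fst)).add
      (continuous_fst.smul continuous_snd.snd)


lemma hullUnionCompact {n K : ℕ} [Nonempty (Fin K)] (Q : Fin K → Set (Fin n → ℝ))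
    (gk : Fin K → ℝ) (hQconv : ∀ k, Convex ℝ (Q k)) (hQcompact : ∀ k, IsCompact (Q k))
    (hne : ∀ k, (Q k).Nonempty) :
    ∀ s : Finset (Fin K), s.Nonempty →
        IsCompact (convexHull ℝ (⋃ k ∈ s, (Q k) ×ˢ ({gk k} : Set ℝ))) ∧
        (⋃ k ∈ s, (Q k) ×ˢ ({gk k} : Set ℝ)).Nonempty := by
  intro s hs
  induction hs using Finset.Nonempty.cons_induction with
  | singleton a =>
    have he : (⋃ k ∈ ({a} : Finset (Fin K)), (Q k) ×ˢ ({gk k} : Set ℝ))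
        = (Q a) ×ˢ ({gk a} : Set ℝ) := by simp
    obtain ⟨y, hy⟩ := hne a
    constructor
    · rw [he, ((hQconv a).prod (convex_singleton _)).convexHull_eq]
      exact (hQcompact a).prod isCompact_singleton
    · rw [he]; exact ⟨(y, gk a), hy, rfl⟩
  | cons a s ha hs ih =>
    have he : (⋃ k ∈ Finset.cons a s ha, (Q k) ×ˢ ({gk k} : Set ℝ))
        = ((Q a) ×ˢ ({gk a} : Set ℝ)) ∪ ⋃ k ∈ s, (Q k) ×ˢ ({gk k} : Set ℝ) := by
      simp [Finset.cons_eq_insert, Set.biUnion_insert]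
    obtain ⟨y, hy⟩ := hne a
    have hane : ((Q a) ×ˢ ({gk a} : Set ℝ)).Nonempty := ⟨(y, gk a), hy, rfl⟩
    constructor
    · rw [he, convexHull_union hane ih.2]
      refine isCompact_convexJoin ?_ ih.1
      rw [((hQconv a).prod (convex_singleton _)).convexHull_eq]
      exact (hQcompact a).prod isCompact_singleton
    · rw [he]
      exact hane.mono Set.subset_union_left

open Pointwise in
set_option maxHeartbeats 1000000 in
/-- Convex envelope of a piecewise constant function on polyhedral pieces:
for every `x` in the convex hull of the union of the polyhedra, the envelope
value `inf {θ : (x, θ) ∈ conv G}` equals `sup {α + βᵀx : (α, β) ∈ E}`. -/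
theorem piecewise_convex_envelope (n : ℕ) (hn : 1 ≤ n) (K : ℕ) (hK : 1 ≤ K)
    (m : Fin K → ℕ)
    (A : (k : Fin K) → Matrix (Fin (m k)) (Fin n) ℝ)
    (b : (k : Fin K) → Fin (m k) → ℝ)
    (gk : Fin K → ℝ)
    (hne : ∀ k, {y : Fin n → ℝ | ∀ j, (A k).mulVec y j ≤ b k j}.Nonempty)
    (hbdd : ∀ k, Bornology.IsBounded {y : Fin n → ℝ | ∀ j, (A k).mulVec y j ≤ b k j}) :
    ∀ x ∈ convexHull ℝ (⋃ k, {y : Fin n → ℝ | ∀ j, (A k).mulVec y j ≤ b k j}),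
      sInf {θ : ℝ | (x, θ) ∈ convexHull ℝ
          (⋃ k, {p : (Fin n → ℝ) × ℝ | (∀ j, (A k).mulVec p.1 j ≤ b k j) ∧ gk k ≤ p.2})} =
      sSup {v : ℝ | ∃ ab : ℝ × (Fin n → ℝ),
        (∀ k, ∃ η : Fin (m k) → ℝ, (∀ j, 0 ≤ η j) ∧
          ab.1 + ∑ j, b k j * η j ≤ gk k ∧ ∀ l, ∑ j, A k j l * η j = ab.2 l) ∧
        v = ab.1 + ∑ l, ab.2 l * x l} := by
  classical
  intro x hx
  haveI : Nonempty (Fin K) := ⟨⟨0, hK⟩⟩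
  set Q : Fin K → Set (Fin n → ℝ) :=
    fun k => {y : Fin n → ℝ | ∀ j, (A k).mulVec y j ≤ b k j} with hQdef
  set G : Set ((Fin n → ℝ) × ℝ) :=
    ⋃ k, {p : (Fin n → ℝ) × ℝ | (∀ j, (A k).mulVec p.1 j ≤ b k j) ∧ gk k ≤ p.2} with hGdef
  set Senv : Set ℝ := {θ : ℝ | (x, θ) ∈ convexHull ℝ G} with hSenvdef
  set Sdual : Set ℝ := {v : ℝ | ∃ ab : ℝ × (Fin n → ℝ),
      (∀ k, ∃ η : Fin (m k) → ℝ, (∀ j, 0 ≤ η j) ∧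
        ab.1 + ∑ j, b k j * η j ≤ gk k ∧ ∀ l, ∑ j, A k j l * η j = ab.2 l) ∧
      v = ab.1 + ∑ l, ab.2 l * x l} with hSdualdef
  clear_value Q G Senv Sdual
  -- basic facts about Q
  have hQmem : ∀ (k : Fin K) (y : Fin n → ℝ),
      y ∈ Q k ↔ ∀ j, (A k).mulVec y j ≤ b k j := by
    simp only [hQdef]
    intro k y
    rfl
  have hne' : ∀ k, (Q k).Nonempty := by
    simp only [hQdef]; exact hne
  have hx' : x ∈ convexHull ℝ (⋃ k, Q k) := hx
  have hmvcont : ∀ (k : Fin K) (j : Fin (m k)),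
      Continuous fun y : Fin n → ℝ => (A k).mulVec y j := by
    intro k j
    simp only [Matrix.mulVec, dotProduct]
    exact continuous_finset_sum _ fun l _ => continuous_const.mul (continuous_apply l)
  have hQclosed : ∀ k, IsClosed (Q k) := by
    intro k
    have : Q k = ⋂ j, {y : Fin n → ℝ | (A k).mulVec y j ≤ b k j} := by
      ext y; simp [hQmem, Set.mem_iInter]
    rw [this]
    exact isClosed_iInter fun j => isClosed_le (hmvcont k j) continuous_const
  have hQconv : ∀ k, Convex ℝ (Q k) := by
    intro k
    simp only [hQdef]
    intro y hy z hz a c ha hc hac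
    intro j
    have : (A k).mulVec (a • y + c • z) j
        = a * (A k).mulVec y j + c * (A k).mulVec z j := by
      simp only [Matrix.mulVec, dotProduct, Pi.add_apply, Pi.smul_apply, smul_eq_mul]
      rw [Finset.mul_sum, Finset.mul_sum, ← Finset.sum_add_distrib]
      exact Finset.sum_congr rfl fun l _ => by ring
    rw [this]
    calc a * (A k).mulVec y j + c * (A k).mulVec z j
        ≤ a * b k j + c * b k j := add_le_add
          (mul_le_mul_of_nonneg_left (hy j) ha) (mul_le_mul_of_nonneg_left (hz j) hc)
      _ = b k j := by rw [← add_mul, hac, one_mul]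
  have hQcompact : ∀ k, IsCompact (Q k) := fun k =>
    Metric.isCompact_of_isClosed_isBounded (hQclosed k)
      (by simp only [hQdef]; exact hbdd k)
  set C : Set ((Fin n → ℝ) × ℝ) := ⋃ k, (Q k) ×ˢ ({gk k} : Set ℝ) with hCdef
  set V : Set ((Fin n → ℝ) × ℝ) := {p | p.1 = 0 ∧ 0 ≤ p.2} with hVdef
  clear_value C V
  have hVmem : ∀ p : (Fin n → ℝ) × ℝ, p ∈ V ↔ p.1 = 0 ∧ 0 ≤ p.2 := by
    simp only [hVdef]; intro p; rfl
  have hVconv : Convex ℝ V := by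
    rw [hVdef]
    rintro p ⟨hp1, hp2⟩ q ⟨hq1, hq2⟩ a c ha hc hac
    constructor
    · show a • p.1 + c • q.1 = 0
      rw [hp1, hq1, smul_zero, smul_zero, add_zero]
    · show 0 ≤ a • p.2 + c • q.2
      exact add_nonneg (smul_nonneg ha hp2) (smul_nonneg hc hq2)
  have hVclosed : IsClosed V := by
    rw [hVdef]
    exact (isClosed_eq continuous_fst continuous_const).inter
      (isClosed_le continuous_const continuous_snd)
  -- G = C + V
  have hGCV : G = C + V := by
    ext p
    constructor
    · intro hp
      rw [hGdef, Set.mem_iUnion] at hp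
      obtain ⟨k, hp1, hp2⟩ := hp
      refine ⟨(p.1, gk k), ?_, (0, p.2 - gk k), ?_, ?_⟩
      · rw [hCdef, Set.mem_iUnion]
        exact ⟨k, (hQmem k p.1).mpr hp1, rfl⟩
      · exact (hVmem _).mpr ⟨rfl, sub_nonneg.mpr hp2⟩
      · apply Prod.ext <;> simp
    · rintro ⟨c, hc, v, hvV, rfl⟩
      obtain ⟨hv1, hv2⟩ := (hVmem _).mp hvV
      rw [hCdef, Set.mem_iUnion] at hc
      obtain ⟨k, hc1, hc2⟩ := hc
      rw [hGdef, Set.mem_iUnion]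
      refine ⟨k, ?_, ?_⟩
      · show ∀ j, (A k).mulVec (c.1 + v.1) j ≤ b k j
        rw [hv1, add_zero]
        exact (hQmem k c.1).mp hc1
      · show gk k ≤ c.2 + v.2
        simp only [Set.mem_singleton_iff] at hc2
        rw [hc2]
        linarith
  have hCcompact : IsCompact (convexHull ℝ C) ∧ C.Nonempty := by
    have h := hullUnionCompact Q gk hQconv hQcompact hne' Finset.univ Finset.univ_nonempty
    have huniv : (⋃ k ∈ (Finset.univ : Finset (Fin K)), (Q k) ×ˢ ({gk k} : Set ℝ)) = C := by
      rw [hCdef]; simp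
    rwa [huniv] at h
  have hGhull : convexHull ℝ G = convexHull ℝ C + V := by
    rw [hGCV, convexHull_add, hVconv.convexHull_eq]
  have hGclosed : IsClosed (convexHull ℝ G) := by
    rw [hGhull]
    exact hVclosed.add_left_of_isCompact hCcompact.1
  -- Senv nonempty
  set M : ℝ := Finset.univ.sup' Finset.univ_nonempty gk with hMdef
  have hSenvne : Senv.Nonempty := by
    refine ⟨M, ?_⟩
    rw [hSenvdef]
    show ((x, M) : (Fin n → ℝ) × ℝ) ∈ convexHull ℝ G
    set L : (Fin n → ℝ) →ₗ[ℝ] (Fin n → ℝ) × ℝ :=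
      LinearMap.prod LinearMap.id 0 with hLdef
    have hsub : L '' (⋃ k, Q k) + {((0 : Fin n → ℝ), M)} ⊆ G := by
      rintro p ⟨q, ⟨y, hy, rfl⟩, r, hr, rfl⟩
      rw [Set.mem_singleton_iff] at hr
      subst hr
      rw [Set.mem_iUnion] at hy
      obtain ⟨k, hyk⟩ := hy
      rw [hGdef, Set.mem_iUnion]
      refine ⟨k, ?_, ?_⟩
      · show ∀ j, (A k).mulVec ((L y).1 + 0) j ≤ b k j
        simpa [hLdef] using (hQmem k y).mp hyk
      · show gk k ≤ (L y).2 + M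
        have h0 : (L y).2 = 0 := rfl
        rw [h0, zero_add, hMdef]
        exact Finset.le_sup' gk (Finset.mem_univ k)
    have hmem : ((x, M) : (Fin n → ℝ) × ℝ)
        ∈ convexHull ℝ (L '' (⋃ k, Q k) + {((0 : Fin n → ℝ), M)}) := by
      rw [convexHull_add, convexHull_singleton, ← L.image_convexHull]
      refine ⟨L x, ⟨x, hx', rfl⟩, ((0 : Fin n → ℝ), M), rfl, ?_⟩
      apply Prod.ext <;> simp [hLdef]
    exact convexHull_mono hsub hmem
  -- Senv bounded below
  set m0 : ℝ := Finset.univ.inf' Finset.univ_nonempty gk with hm0def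
  have hSenvbdd : BddBelow Senv := by
    refine ⟨m0, fun θ hθ => ?_⟩
    rw [hSenvdef] at hθ
    have hconv : Convex ℝ {p : (Fin n → ℝ) × ℝ | m0 ≤ p.2} := by
      rintro p hp q hq a c ha hc hac
      have hp' : m0 ≤ p.2 := hp
      have hq' : m0 ≤ q.2 := hq
      show m0 ≤ a • p.2 + c • q.2
      simp only [smul_eq_mul]
      have h1 := mul_le_mul_of_nonneg_left hp' ha
      have h2 := mul_le_mul_of_nonneg_left hq' hc
      have e : a * m0 + c * m0 = m0 := by rw [← add_mul, hac, one_mul]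
      linarith
    have hsubG : G ⊆ {p : (Fin n → ℝ) × ℝ | m0 ≤ p.2} := by
      rintro p hp
      rw [hGdef, Set.mem_iUnion] at hp
      obtain ⟨k, _, hp2⟩ := hp
      exact le_trans (Finset.inf'_le gk (Finset.mem_univ k)) hp2
    exact convexHull_min hsubG hconv hθ
  have hSenvclosed : IsClosed Senv := by
    have : Senv = (fun θ : ℝ => ((x, θ) : (Fin n → ℝ) × ℝ)) ⁻¹' (convexHull ℝ G) := by
      rw [hSenvdef]; rfl
    rw [this]
    exact hGclosed.preimage (Continuous.prodMk_right x)
  -- key : dual elements are below env elements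
  have key : ∀ v ∈ Sdual, ∀ θ ∈ Senv, v ≤ θ := by
    intro v hv θ hθ
    rw [hSdualdef] at hv
    rw [hSenvdef] at hθ
    obtain ⟨⟨α, β⟩, hk, rfl⟩ := hv
    dsimp only at hk ⊢
    set H : Set ((Fin n → ℝ) × ℝ) := {p | α + ∑ l, β l * p.1 l ≤ p.2} with hHdef
    have hHconv : Convex ℝ H := by
      rintro p hp q hq a c ha hc hac
      have h1 : ∑ l, β l * (a • p + c • q).1 l
          = a * (∑ l, β l * p.1 l) + c * (∑ l, β l * q.1 l) := by
        simp only [Prod.fst_add, Prod.smul_fst, Pi.add_apply, Pi.smul_apply, smul_eq_mul]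
        rw [Finset.mul_sum, Finset.mul_sum, ← Finset.sum_add_distrib]
        exact Finset.sum_congr rfl fun l _ => by ring
      show α + ∑ l, β l * (a • p + c • q).1 l ≤ (a • p + c • q).2
      rw [h1]
      have h2 : (a • p + c • q).2 = a * p.2 + c * q.2 := rfl
      rw [h2]
      have hp' : α + ∑ l, β l * p.1 l ≤ p.2 := hp
      have hq' : α + ∑ l, β l * q.1 l ≤ q.2 := hq
      have hp2' := mul_le_mul_of_nonneg_left hp' ha
      have hq2' := mul_le_mul_of_nonneg_left hq' hc
      have e4 : a * (α + ∑ l, β l * p.1 l) = a * α + a * (∑ l, β l * p.1 l) := by ring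
      have e5 : c * (α + ∑ l, β l * q.1 l) = c * α + c * (∑ l, β l * q.1 l) := by ring
      have e6 : a * α + c * α = α := by rw [← add_mul, hac, one_mul]
      linarith
    have hGH : G ⊆ H := by
      rintro p hp
      rw [hGdef, Set.mem_iUnion] at hp
      obtain ⟨k, hp1, hp2⟩ := hp
      obtain ⟨η, hηnn, hηb, hηA⟩ := hk k
      have e1 : ∑ l, β l * p.1 l = ∑ j, η j * (A k).mulVec p.1 j := by
        calc ∑ l, β l * p.1 l = ∑ l, ∑ j, A k j l * η j * p.1 l := by
              refine Finset.sum_congr rfl fun l _ => ?_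
              rw [← hηA l, Finset.sum_mul]
          _ = ∑ j, ∑ l, A k j l * η j * p.1 l := Finset.sum_comm
          _ = ∑ j, η j * (A k).mulVec p.1 j := by
              refine Finset.sum_congr rfl fun j _ => ?_
              simp only [Matrix.mulVec, dotProduct]
              rw [Finset.mul_sum]
              exact Finset.sum_congr rfl fun l _ => by ring
      have e2 : ∑ j, η j * (A k).mulVec p.1 j ≤ ∑ j, η j * b k j :=
        Finset.sum_le_sum fun j _ => mul_le_mul_of_nonneg_left (hp1 j) (hηnn j)
      have e3 : ∑ j, η j * b k j = ∑ j, b k j * η j :=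
        Finset.sum_congr rfl fun j _ => mul_comm _ _
      show α + ∑ l, β l * p.1 l ≤ p.2
      rw [e1]
      linarith
    exact convexHull_min hGH hHconv hθ
  -- Sdual nonempty and bounded above
  have hSdualne : Sdual.Nonempty := by
    rw [hSdualdef]
    refine ⟨m0, ⟨(m0, 0), fun k => ⟨0, fun j => le_rfl, ?_, fun l => by simp⟩, by simp⟩⟩
    have h : m0 ≤ gk k := by rw [hm0def]; exact Finset.inf'_le gk (Finset.mem_univ k)
    simpa using h
  obtain ⟨θM, hθM⟩ := hSenvne
  have hSdualbdd : BddAbove Sdual := ⟨θM, fun v hv => key v hv θM hθM⟩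
  -- the two directions
  apply le_antisymm
  · -- sInf ≤ sSup : hard direction
    by_contra hcon
    push_neg at hcon
    set θs : ℝ := sInf Senv with hθs
    have hθsmem : θs ∈ Senv := hSenvclosed.csInf_mem ⟨θM, hθM⟩ hSenvbdd
    set ε : ℝ := θs - sSup Sdual with hε
    have hεpos : 0 < ε := by
      simp only [hε]
      exact sub_pos.mpr hcon
    have hnotin : ((x, θs - ε) : (Fin n → ℝ) × ℝ) ∉ convexHull ℝ G := by
      intro hmem
      have hmem' : θs - ε ∈ Senv := by rw [hSenvdef]; exact hmem
      have := csInf_le hSenvbdd hmem'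
      linarith
    obtain ⟨f, u, hfx, hfs⟩ :=
      geometric_hahn_banach_point_closed (convex_convexHull ℝ G) hGclosed hnotin
    set w : Fin n → ℝ := fun l => f (Pi.single l 1, 0) with hw
    set cc : ℝ := f (0, 1) with hcc
    have hθs2 : ((x, θs) : (Fin n → ℝ) × ℝ) ∈ convexHull ℝ G := by
      rw [hSenvdef] at hθsmem; exact hθsmem
    have hup : u < (∑ l, x l * w l) + θs * cc := by
      have := hfs _ hθs2
      rwa [clm_decomp] at this
    have hdown : (∑ l, x l * w l) + (θs - ε) * cc < u := by
      have := hfx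
      rwa [clm_decomp] at this
    have hccpos : 0 < cc := by nlinarith
    set α : ℝ := u / cc with hα
    set β : Fin n → ℝ := fun l => -(w l) / cc with hβ
    have hfark : ∀ k, ∃ η : Fin (m k) → ℝ, (∀ j, 0 ≤ η j) ∧
        α + ∑ j, b k j * η j ≤ gk k ∧ ∀ l, ∑ j, A k j l * η j = β l := by
      intro k
      have hyp : ∀ y : Fin n → ℝ, (∀ j, (A k).mulVec y j ≤ b k j) →
          ∑ l, β l * y l ≤ gk k - α := by
        intro y hy
        have hyG : ((y, gk k) : (Fin n → ℝ) × ℝ) ∈ G := by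
          rw [hGdef, Set.mem_iUnion]
          exact ⟨k, hy, le_rfl⟩
        have h1 : u < (∑ l, y l * w l) + gk k * cc := by
          have := hfs _ (subset_convexHull ℝ G hyG)
          rwa [clm_decomp] at this
        have e : ∑ l, β l * y l = (-(∑ l, y l * w l)) / cc := by
          simp only [hβ]
          simp_rw [show ∀ l, -(w l) / cc * y l = -(y l * w l) / cc from fun l => by ring]
          rw [← Finset.sum_div, Finset.sum_neg_distrib]
        rw [e, div_le_iff₀ hccpos]
        have : (gk k - α) * cc = gk k * cc - u := by
          rw [hα]
          field_simp
        rw [this]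
        linarith
      obtain ⟨η, h1, h2, h3⟩ := farkas (A k) (b k) β (gk k - α) (hne k) hyp
      exact ⟨η, h1, by linarith, h3⟩
    have hvmem : α + ∑ l, β l * x l ∈ Sdual := by
      rw [hSdualdef]
      exact ⟨(α, β), hfark, rfl⟩
    have hvle := le_csSup hSdualbdd hvmem
    have hvgt : θs - ε < α + ∑ l, β l * x l := by
      have e : ∑ l, β l * x l = (-(∑ l, x l * w l)) / cc := by
        simp only [hβ]
        simp_rw [show ∀ l, -(w l) / cc * x l = -(x l * w l) / cc from fun l => by ring]
        rw [← Finset.sum_div, Finset.sum_neg_distrib]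
      rw [e, hα, ← add_div, lt_div_iff₀ hccpos]
      linarith
    have heq : sSup Sdual = θs - ε := by rw [hε]; ring
    linarith
  · exact csSup_le hSdualne fun v hv => le_csInf ⟨θM, hθM⟩ fun θ hθ => key v hv θ hθ
end

section
/- Lipschitz continuity of a parametric convex value function under a Slater condition: Let E = ℝ^{n_1} and F = ℝ^{n_2}, let Z ⊆ F be a nonempty compact convex set, let ℓ : F → ℝ be Lipschitz continuous, let m ≥ 1 and L : E × F → ℝ^m be Lipschitz continuous such that for every x ∈ E and every component j, the map z ↦ L(x, z)_j is convex on Z, and suppose there exists δ > 0 such that for every x ∈ E there exists z ∈ Z with L(x, z)_j < −δ for all j. Then the value function V(x) := inf { ℓ(z) : z ∈ Z, L(x, z)_j ≤ 0 for all j } is Lipschitz continuous on E. -/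
/-- Lipschitz continuity of a parametric convex value function under a uniform
Slater condition. -/
theorem value_function_lipschitz (n₁ n₂ : ℕ) (m : ℕ) (hm : 1 ≤ m)
    (Z : Set (Fin n₂ → ℝ)) (hZne : Z.Nonempty) (hZc : IsCompact Z) (hZconv : Convex ℝ Z)
    (ℓ : (Fin n₂ → ℝ) → ℝ) (hℓ : ∃ K : NNReal, LipschitzWith K ℓ)
    (L : (Fin n₁ → ℝ) × (Fin n₂ → ℝ) → Fin m → ℝ)
    (hL : ∃ K : NNReal, LipschitzWith K L)
    (hconv : ∀ (x : Fin n₁ → ℝ) (j : Fin m), ConvexOn ℝ Z (fun z => L (x, z) j))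
    (hslater : ∃ δ > (0 : ℝ), ∀ x : Fin n₁ → ℝ, ∃ z ∈ Z, ∀ j, L (x, z) j < -δ) :
    ∃ K : NNReal, LipschitzWith K
      (fun x : Fin n₁ → ℝ => sInf (ℓ '' {z | z ∈ Z ∧ ∀ j, L (x, z) j ≤ 0})) := by
  obtain ⟨Kℓ, hKℓ⟩ := hℓ
  obtain ⟨KL, hKL⟩ := hL
  obtain ⟨δ, hδ, hsl⟩ := hslater
  set D := Metric.diam Z with hD
  have hD0 : 0 ≤ D := Metric.diam_nonneg
  set C : ℝ := (Kℓ : ℝ) * (KL : ℝ) * D / δ with hC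
  have hC0 : 0 ≤ C := by positivity
  set S : (Fin n₁ → ℝ) → Set (Fin n₂ → ℝ) :=
    fun x => {z | z ∈ Z ∧ ∀ j, L (x, z) j ≤ 0} with hS
  have hLcont : Continuous L := hKL.continuous
  have hℓcont : Continuous ℓ := hKℓ.continuous
  have hLxcont : ∀ (x : Fin n₁ → ℝ) (j : Fin m), Continuous fun z => L (x, z) j := by
    intro x j
    exact (continuous_apply j).comp (hLcont.comp (Continuous.prodMk_right x))
  have hScompact : ∀ x, IsCompact (S x) := by
    intro x
    apply hZc.inter_right
    have h : {z : Fin n₂ → ℝ | ∀ j, L (x, z) j ≤ 0} = ⋂ j, {z | L (x, z) j ≤ 0} :=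
      Set.setOf_forall _
    show IsClosed {z : Fin n₂ → ℝ | ∀ j, L (x, z) j ≤ 0}
    rw [h]
    exact isClosed_iInter fun j => isClosed_le (hLxcont x j) continuous_const
  have hSne : ∀ x, (S x).Nonempty := by
    intro x
    obtain ⟨z, hzZ, hz⟩ := hsl x
    exact ⟨z, hzZ, fun j => (hz j).le.trans (by linarith)⟩
  have hcomp : ∀ (x y : Fin n₁ → ℝ) (z : Fin n₂ → ℝ) (j : Fin m),
      L (x, z) j ≤ L (y, z) j + (KL : ℝ) * dist x y := by
    intro x y z j
    have h1 : dist (L (x, z) j) (L (y, z) j) ≤ dist (L (x, z)) (L (y, z)) :=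
      dist_le_pi_dist _ _ j
    have h2 : dist (L (x, z)) (L (y, z)) ≤ (KL : ℝ) * dist ((x, z)) ((y, z)) :=
      hKL.dist_le_mul _ _
    have h3 : dist ((x, z) : (Fin n₁ → ℝ) × (Fin n₂ → ℝ)) ((y, z)) = dist x y := by
      simp [Prod.dist_eq, dist_nonneg]
    rw [h3] at h2
    have := abs_sub_le_iff.mp (le_trans (le_of_eq (Real.dist_eq _ _).symm) (h1.trans h2))
    linarith [this.1]
  -- one-sided key estimate
  have key : ∀ x y : Fin n₁ → ℝ,
      sInf (ℓ '' S x) ≤ sInf (ℓ '' S y) + C * dist x y := by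
    intro x y
    obtain ⟨zs, hzs, hmin⟩ := (hScompact y).exists_isMinOn (hSne y) hℓcont.continuousOn
    have hVy : sInf (ℓ '' S y) = ℓ zs := by
      apply IsLeast.csInf_eq
      constructor
      · exact ⟨zs, hzs, rfl⟩
      · rintro _ ⟨w, hw, rfl⟩
        exact isMinOn_iff.mp hmin w hw
    obtain ⟨zx, hzxZ, hzx⟩ := hsl x
    set d := dist x y with hd
    have hd0 : 0 ≤ d := dist_nonneg
    set t : ℝ := min 1 ((KL : ℝ) * d / δ) with ht
    have ht0 : 0 ≤ t := le_min zero_le_one (by positivity)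
    have ht1 : t ≤ 1 := min_le_left _ _
    have htle : t ≤ (KL : ℝ) * d / δ := min_le_right _ _
    set w : Fin n₂ → ℝ := (1 - t) • zs + t • zx with hw
    have hwZ : w ∈ Z := hZconv hzs.1 hzxZ (by linarith) ht0 (by ring)
    have hkey : (1 - t) * ((KL : ℝ) * d) ≤ t * δ := by
      rcases le_or_gt ((KL : ℝ) * d / δ) 1 with h | h
      · have htt : t = (KL : ℝ) * d / δ := min_eq_right h
        have htd : t * δ = (KL : ℝ) * d := by
          rw [htt]; field_simp
        nlinarith [mul_nonneg (mul_nonneg ht0 (NNReal.coe_nonneg KL)) hd0]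
      · have htt : t = 1 := min_eq_left h.le
        rw [htt]; simp; linarith
    have hwS : w ∈ S x := by
      refine ⟨hwZ, fun j => ?_⟩
      have h1 : L (x, w) j ≤ (1 - t) * L (x, zs) j + t * L (x, zx) j := by
        have := (hconv x j).2 hzs.1 hzxZ (by linarith : (0:ℝ) ≤ 1 - t) ht0 (by ring)
        simpa using this
      have h2 : L (x, zs) j ≤ (KL : ℝ) * d := by
        have := hcomp x y zs j
        have h0 := hzs.2 j
        rw [← hd] at this
        linarith
      have h3 : L (x, zx) j ≤ -δ := (hzx j).le
      have : (1 - t) * L (x, zs) j ≤ (1 - t) * ((KL : ℝ) * d) :=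
        mul_le_mul_of_nonneg_left h2 (by linarith)
      have h4 : t * L (x, zx) j ≤ t * (-δ) := mul_le_mul_of_nonneg_left h3 ht0
      nlinarith
    have hdistwz : dist w zs ≤ t * D := by
      have hsub : w - zs = t • (zx - zs) := by
        rw [hw]; module
      have : dist w zs = t * ‖zx - zs‖ := by
        rw [dist_eq_norm, hsub, norm_smul, Real.norm_eq_abs, abs_of_nonneg ht0]
      rw [this]
      have : ‖zx - zs‖ ≤ D := by
        rw [← dist_eq_norm]
        exact Metric.dist_le_diam_of_mem hZc.isBounded hzxZ hzs.1
      exact mul_le_mul_of_nonneg_left this ht0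
    have hℓw : ℓ w ≤ ℓ zs + (Kℓ : ℝ) * (t * D) := by
      have h1 : dist (ℓ w) (ℓ zs) ≤ (Kℓ : ℝ) * dist w zs := hKℓ.dist_le_mul _ _
      have h2 := abs_sub_le_iff.mp (le_trans (le_of_eq (Real.dist_eq _ _).symm) h1)
      have h3 : (Kℓ : ℝ) * dist w zs ≤ (Kℓ : ℝ) * (t * D) :=
        mul_le_mul_of_nonneg_left hdistwz (NNReal.coe_nonneg Kℓ)
      linarith [h2.1]
    have hVx : sInf (ℓ '' S x) ≤ ℓ w := by
      apply csInf_le ((hScompact x).image hℓcont).bddBelow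
      exact ⟨w, hwS, rfl⟩
    have hfin : (Kℓ : ℝ) * (t * D) ≤ C * d := by
      have h1 : t * D ≤ ((KL : ℝ) * d / δ) * D :=
        mul_le_mul_of_nonneg_right htle hD0
      have h2 : (Kℓ : ℝ) * (t * D) ≤ (Kℓ : ℝ) * (((KL : ℝ) * d / δ) * D) :=
        mul_le_mul_of_nonneg_left h1 (NNReal.coe_nonneg Kℓ)
      have h3 : (Kℓ : ℝ) * (((KL : ℝ) * d / δ) * D) = C * d := by
        rw [hC]; field_simp
      linarith
    rw [hVy]
    linarith
  refine ⟨C.toNNReal, LipschitzWith.of_dist_le_mul fun x y => ?_⟩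
  have hco : (C.toNNReal : ℝ) = C := Real.coe_toNNReal _ hC0
  rw [Real.dist_eq, hco]
  rw [abs_sub_le_iff]
  constructor
  · linarith [key x y]
  · have h2 := key y x
    rw [dist_comm y x] at h2
    linarith
end
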